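/- arXiv:0908.1586 — 5 statements merged into one kernel-verified Lean document; each statement's English description precedes it below -/
import Mathlib

section
/- Let V ⊆ ℝ_max^4 be the max-plus cone generated by the four vectors v^r = (r, 2r, 3r, 4r) for r = 1, 2, 3, 4. For every real number δ with −1 < δ < 0, the half-space {x ∈ ℝ_max^4 : max(6 + x_2, δ + x_4) ≤ max(8 + x_1, δ + 4 + x_3)} is minimal with respect to V. Consequently, the set of half-spaces that are minimal with respect to V is infinite. -/
noncomputable section

/-- The max-plus (tropical) semiring `ℝ ∪ {-∞}`:
addition is `max`, multiplication is `+` (with `-∞` absorbing). -/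
abbrev Rmax : Type := WithBot ℝ

/-- A max-plus (tropical) cone: a set stable under max-plus linear combinations. -/
def IsTropCone {ι : Type} (V : Set (ι → Rmax)) : Prop :=
  ∀ u ∈ V, ∀ w ∈ V, ∀ lam mu : Rmax, (fun i => max (lam + u i) (mu + w i)) ∈ V

/-- `tropCone X`: the set of all max-plus linear combinations of finitely many
elements of `X`. -/
def tropCone {ι : Type} (X : Set (ι → Rmax)) : Set (ι → Rmax) :=
  {x | ∃ (m : ℕ) (lam : Fin m → Rmax) (w : Fin m → ι → Rmax),
        (∀ s, w s ∈ X) ∧ x = fun i => Finset.univ.sup (fun s => lam s + w s i)}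

/-- `tropCo X`: max-plus convex combinations (coefficients with maximum `0 = 𝟙`)
of finitely many elements of `X`. -/
def tropCo {ι : Type} (X : Set (ι → Rmax)) : Set (ι → Rmax) :=
  {x | ∃ (m : ℕ) (lam : Fin m → Rmax) (w : Fin m → ι → Rmax),
        (∀ s, w s ∈ X) ∧ Finset.univ.sup lam = (0 : Rmax) ∧
        x = fun i => Finset.univ.sup (fun s => lam s + w s i)}

/-- Max-plus Minkowski sum of two subsets. -/
def tropSum {ι : Type} (A B : Set (ι → Rmax)) : Set (ι → Rmax) :=
  {z | ∃ a ∈ A, ∃ b ∈ B, z = fun i => max (a i) (b i)}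

/-- A half-space of `ℝ_max^ι`. -/
def IsHalfSpace {ι : Type} [Fintype ι] (H : Set (ι → Rmax)) : Prop :=
  ∃ a b : ι → Rmax,
    H = {x | Finset.univ.sup (fun i => a i + x i) ≤ Finset.univ.sup (fun j => b j + x j)}

/-- An affine half-space of `ℝ_max^ι`. -/
def IsAffineHalfSpace {ι : Type} [Fintype ι] (H : Set (ι → Rmax)) : Prop :=
  ∃ (a b : ι → Rmax) (c d : Rmax),
    H = {x | max (Finset.univ.sup (fun i => a i + x i)) c ≤
             max (Finset.univ.sup (fun j => b j + x j)) d}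

/-- A max-plus polyhedron: an intersection of finitely many affine half-spaces. -/
def IsPolyhedron {ι : Type} [Fintype ι] (C : Set (ι → Rmax)) : Prop :=
  ∃ (m : ℕ) (H : Fin m → Set (ι → Rmax)),
    (∀ k, IsAffineHalfSpace (H k)) ∧ C = ⋂ k, H k

/-- The recession cone of a max-plus convex set. -/
def recessionCone {ι : Type} (C : Set (ι → Rmax)) : Set (ι → Rmax) :=
  {u | ∃ x ∈ C, ∀ lam : Rmax, (fun i => max (x i) (lam + u i)) ∈ C}

/-- A half-space minimal (for inclusion) among the half-spaces containing `V`. -/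
def IsMinimalHalfSpace {ι : Type} [Fintype ι] (V H : Set (ι → Rmax)) : Prop :=
  IsHalfSpace H ∧ V ⊆ H ∧ ¬ ∃ H', IsHalfSpace H' ∧ V ⊆ H' ∧ H' ⊂ H

/-- The half-space written in normal form: `max_{i ∈ I} (a i + x i) ≤ max_{j ∈ J} (a j + x j)`
(the sup over an empty index set being `⊥ = -∞`). -/
def halfSpace {ι : Type} (I J : Finset ι) (a : ι → ℝ) : Set (ι → Rmax) :=
  {x | I.sup (fun i => ((a i : Rmax)) + x i) ≤ J.sup (fun j => ((a j : Rmax)) + x j)}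

/-- The max-plus cone generated by the vectors `v 0, …, v (p-1)` (finite entries). -/
def genCone {ι : Type} [Fintype ι] {p : ℕ} (v : Fin p → ι → ℝ) : Set (ι → Rmax) :=
  {x | ∃ lam : Fin p → Rmax, x = fun i => Finset.univ.sup (fun r => lam r + ((v r i : Rmax)))}

/-- `S_j(x)`: the `j`-th component of the type of `x` relative to the generators `v`. -/
def typeSet {ι : Type} {p : ℕ} (v : Fin p → ι → ℝ) (x : ι → ℝ) (j : ι) : Set (Fin p) :=
  {r | v r j - x j = ⨆ k, (v r k - x k)}

/-- `V` has full support. -/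
def HasFullSupport {ι : Type} (V : Set (ι → Rmax)) : Prop :=
  ∀ k : ι, ∃ v ∈ V, v k ≠ ⊥

/-- `x` is a vertex of the natural cell decomposition induced by the generators `v`:
the cell of `type(x)` consists exactly of the (finite) scalar multiples of `x`. -/
def IsVertex {ι : Type} {p : ℕ} (v : Fin p → ι → ℝ) (x : ι → ℝ) : Prop :=
  {y : ι → ℝ | ∀ j, typeSet v x j ⊆ typeSet v y j} = {y | ∃ c : ℝ, y = fun i => c + x i}

/-- The `i`-th max-plus unit vector. -/
def unitVec {ι : Type} [DecidableEq ι] (i : ι) : ι → Rmax :=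
  fun k => if k = i then (0 : Rmax) else ⊥

/-- The vector `⊕_{j ∈ J} b j ⊙ e^j`. -/
def jVec {ι : Type} [DecidableEq ι] (J : Finset ι) (b : ι → ℝ) : ι → Rmax :=
  fun k => if k ∈ J then ((b k : Rmax)) else ⊥

/-- The polar of a max-plus cone: the set of (pairs defining) half-spaces containing it. -/
def polar {ι : Type} [Fintype ι] (V : Set (ι → Rmax)) : Set ((ι → Rmax) × (ι → Rmax)) :=
  {q | ∀ x ∈ V, Finset.univ.sup (fun i => q.1 i + x i) ≤ Finset.univ.sup (fun j => q.2 j + x j)}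

/-- Extreme vector of a max-plus cone of pairs (e.g. the polar). -/
def IsExtremePair {ι : Type} (W : Set ((ι → Rmax) × (ι → Rmax)))
    (z : (ι → Rmax) × (ι → Rmax)) : Prop :=
  z ∈ W ∧ z ≠ (fun _ => (⊥ : Rmax), fun _ => (⊥ : Rmax)) ∧
    ∀ u ∈ W, ∀ w ∈ W,
      z = (fun i => max (u.1 i) (w.1 i), fun i => max (u.2 i) (w.2 i)) → z = u ∨ z = w

/-- Extreme point of a max-plus convex set. -/
def IsExtremePoint {ι : Type} (C : Set (ι → Rmax)) (z : ι → Rmax) : Prop :=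
  z ∈ C ∧ ∀ u ∈ C, ∀ w ∈ C, ∀ lam mu : Rmax, max lam mu = (0 : Rmax) →
    z = (fun i => max (lam + u i) (mu + w i)) → z = u ∨ z = w

/-- Extreme vector of a max-plus cone. -/
def IsExtremeVector {ι : Type} (W : Set (ι → Rmax)) (z : ι → Rmax) : Prop :=
  z ∈ W ∧ z ≠ (fun _ => (⊥ : Rmax)) ∧
    ∀ u ∈ W, ∀ w ∈ W, z = (fun i => max (u i) (w i)) → z = u ∨ z = w

/-- Projection of a subset of `ℝ_max^ι` onto the coordinates indexed by `K`. -/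
def projCone {ι : Type} (K : Finset ι) (V : Set (ι → Rmax)) :
    Set ({k : ι // k ∈ K} → Rmax) :=
  {y | ∃ x ∈ V, y = fun k => x k.1}

/-- The generators of the counter-example: `v^r = (r, 2r, 3r, 4r)`, `r = 1,…,4`. -/
def v4 : Fin 4 → Fin 4 → ℝ := fun r i => ((r : ℕ) + 1) * ((i : ℕ) + 1)

lemma sup4 (f : Fin 4 → Rmax) : Finset.univ.sup f = f 0 ⊔ f 1 ⊔ f 2 ⊔ f 3 := by
  have : (Finset.univ : Finset (Fin 4)) = {0, 1, 2, 3} := rfl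
  rw [this]; simp [Finset.sup_insert, sup_assoc]

lemma mat0 (p q r s : Rmax) : (![p,q,r,s]) 0 = p := rfl
lemma mat1 (p q r s : Rmax) : (![p,q,r,s]) 1 = q := rfl
lemma mat2 (p q r s : Rmax) : (![p,q,r,s]) 2 = r := rfl
lemma mat3 (p q r s : Rmax) : (![p,q,r,s]) 3 = s := rfl

lemma fin3 : ((3:Fin 4):ℕ) = 3 := by decide

lemma add_coe_lt_add_coe {a b : Rmax} (c : ℝ) (h : a < b) : a + (c:Rmax) < b + c := by
  obtain ⟨B, rfl⟩ := WithBot.ne_bot_iff_exists.mp (bot_le.trans_lt h).ne'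
  induction a using WithBot.recBotCoe with
  | bot => rw [WithBot.bot_add, ← WithBot.coe_add]; exact WithBot.bot_lt_coe _
  | coe A =>
    rw [← WithBot.coe_add, ← WithBot.coe_add]
    exact WithBot.coe_lt_coe.mpr (add_lt_add_left (WithBot.coe_lt_coe.mp h) c)

lemma le_sup4_0 {t0 t1 t2 t3 : Rmax} : t0 ≤ t0 ⊔ t1 ⊔ t2 ⊔ t3 :=
  le_sup_of_le_left (le_sup_of_le_left le_sup_left)
lemma le_sup4_1 {t0 t1 t2 t3 : Rmax} : t1 ≤ t0 ⊔ t1 ⊔ t2 ⊔ t3 :=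
  le_sup_of_le_left (le_sup_of_le_left le_sup_right)
lemma le_sup4_2 {t0 t1 t2 t3 : Rmax} : t2 ≤ t0 ⊔ t1 ⊔ t2 ⊔ t3 := le_sup_of_le_left le_sup_right
lemma le_sup4_3 {t0 t1 t2 t3 : Rmax} : t3 ≤ t0 ⊔ t1 ⊔ t2 ⊔ t3 := le_sup_right

lemma le_sup4_iff {s t0 t1 t2 t3 : Rmax} (h : s ≤ t0 ⊔ t1 ⊔ t2 ⊔ t3) :
    s ≤ t0 ∨ s ≤ t1 ∨ s ≤ t2 ∨ s ≤ t3 := by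
  simpa [le_sup_iff, or_assoc] using h

lemma sup4_lt {s t0 t1 t2 t3 : Rmax} (h0 : t0 < s) (h1 : t1 < s) (h2 : t2 < s) (h3 : t3 < s) :
    t0 ⊔ t1 ⊔ t2 ⊔ t3 < s := by simp [sup_lt_iff, *]

lemma sup4_le02 {t0 t1 t2 t3 : Rmax} (h1 : t1 < t0 ⊔ t1 ⊔ t2 ⊔ t3)
    (h3 : t3 < t0 ⊔ t1 ⊔ t2 ⊔ t3) : t0 ⊔ t1 ⊔ t2 ⊔ t3 ≤ t0 ⊔ t2 := by
  rcases le_sup4_iff (le_refl (t0 ⊔ t1 ⊔ t2 ⊔ t3)) with h | h | h | h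
  · exact h.trans le_sup_left
  · exact absurd h (not_le.mpr h1)
  · exact h.trans le_sup_right
  · exact absurd h (not_le.mpr h3)

lemma sup4_le2 {t0 t1 t2 t3 : Rmax} (h0 : t0 < t0 ⊔ t1 ⊔ t2 ⊔ t3)
    (h1 : t1 < t0 ⊔ t1 ⊔ t2 ⊔ t3) (h3 : t3 < t0 ⊔ t1 ⊔ t2 ⊔ t3) :
    t0 ⊔ t1 ⊔ t2 ⊔ t3 ≤ t2 := by
  rcases le_sup_iff.mp (sup4_le02 h1 h3) with h | h
  · exact absurd h (not_le.mpr h0)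
  · exact h

lemma sup4_le0 {t0 t1 t2 t3 : Rmax} (h1 : t1 < t0 ⊔ t1 ⊔ t2 ⊔ t3)
    (h2 : t2 < t0 ⊔ t1 ⊔ t2 ⊔ t3) (h3 : t3 < t0 ⊔ t1 ⊔ t2 ⊔ t3) :
    t0 ⊔ t1 ⊔ t2 ⊔ t3 ≤ t0 := by
  rcases le_sup4_iff (le_refl (t0 ⊔ t1 ⊔ t2 ⊔ t3)) with h | h | h | h
  · exact h
  · exact absurd h (not_le.mpr h1)
  · exact absurd h (not_le.mpr h2)
  · exact absurd h (not_le.mpr h3)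

lemma shift_le {c d : ℝ} (e : ℝ) {x y : Rmax} (h : (c:Rmax) + x ≤ (d:Rmax) + y) :
    ((c+e:ℝ):Rmax) + x ≤ ((d+e:ℝ):Rmax) + y := by
  have h1 : ((c+e:ℝ):Rmax) + x = (e:Rmax) + ((c:Rmax) + x) := by
    rw [add_comm c e, WithBot.coe_add, add_assoc]
  have h2 : ((d+e:ℝ):Rmax) + y = (e:Rmax) + ((d:Rmax) + y) := by
    rw [add_comm d e, WithBot.coe_add, add_assoc]
  rw [h1, h2]; exact add_le_add_right h _

lemma vgen_mem (r : Fin 4) : (fun i => ((v4 r i : ℝ) : Rmax)) ∈ genCone v4 := by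
  refine ⟨fun s => if s = r then (0:Rmax) else ⊥, funext fun i => ?_⟩
  rw [sup4]
  fin_cases r <;> simp

def Hs (δ : ℝ) : Set (Fin 4 → Rmax) :=
  {x : Fin 4 → Rmax |
    max (((6 : ℝ) : Rmax) + x 1) ((δ : Rmax) + x 3) ≤
      max (((8 : ℝ) : Rmax) + x 0) (((δ + 4 : ℝ) : Rmax) + x 2)}

lemma Hs_min (δ : ℝ) (h1 : -1 < δ) (h2 : δ < 0) (a b : Fin 4 → Rmax)
    (hV : genCone v4 ⊆
      {x | Finset.univ.sup (fun i => a i + x i) ≤ Finset.univ.sup (fun j => b j + x j)})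
    (hsub : {x | Finset.univ.sup (fun i => a i + x i)
        ≤ Finset.univ.sup (fun j => b j + x j)} ⊆ Hs δ) :
    Hs δ ⊆ {x | Finset.univ.sup (fun i => a i + x i)
        ≤ Finset.univ.sup (fun j => b j + x j)} := by
  have hmem : ∀ x : Fin 4 → Rmax,
      (a 0 + x 0) ⊔ (a 1 + x 1) ⊔ (a 2 + x 2) ⊔ (a 3 + x 3) ≤
        (b 0 + x 0) ⊔ (b 1 + x 1) ⊔ (b 2 + x 2) ⊔ (b 3 + x 3) → x ∈ Hs δ := by
    intro x h
    apply hsub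
    simp only [Set.mem_setOf_eq]
    rw [sup4, sup4]
    exact h
  -- Step A
  have hA1 : b 1 < a 1 := by
    by_contra hle
    have hle' : a 1 ≤ b 1 := not_lt.mp hle
    have hm := hmem ![⊥, (0:Rmax), ⊥, ⊥] (by
      simp only [mat0, mat1, mat2, mat3, WithBot.add_bot, bot_sup_eq, sup_bot_eq, add_zero]
      exact hle')
    simp only [Hs, Set.mem_setOf_eq, mat0, mat1, mat2, mat3, WithBot.add_bot] at hm
    simp at hm
  have hA3 : b 3 < a 3 := by
    by_contra hle
    have hle' : a 3 ≤ b 3 := not_lt.mp hle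
    have hm := hmem ![⊥, ⊥, ⊥, (0:Rmax)] (by
      simp only [mat0, mat1, mat2, mat3, WithBot.add_bot, bot_sup_eq, sup_bot_eq, add_zero]
      exact hle')
    simp only [Hs, Set.mem_setOf_eq, mat0, mat1, mat2, mat3, WithBot.add_bot] at hm
    simp at hm
  obtain ⟨A1, hA1e⟩ : ∃ r : ℝ, a 1 = (r:Rmax) := by
    obtain ⟨r, hr⟩ := WithBot.ne_bot_iff_exists.mp (bot_le.trans_lt hA1).ne'
    exact ⟨r, hr.symm⟩
  obtain ⟨A3, hA3e⟩ : ∃ r : ℝ, a 3 = (r:Rmax) := by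
    obtain ⟨r, hr⟩ := WithBot.ne_bot_iff_exists.mp (bot_le.trans_lt hA3).ne'
    exact ⟨r, hr.symm⟩
  -- generator constraints
  have hgen : ∀ r : Fin 4,
      (a 0 + ((v4 r 0:ℝ):Rmax)) ⊔ (a 1 + ((v4 r 1:ℝ):Rmax)) ⊔ (a 2 + ((v4 r 2:ℝ):Rmax))
        ⊔ (a 3 + ((v4 r 3:ℝ):Rmax)) ≤
      (b 0 + ((v4 r 0:ℝ):Rmax)) ⊔ (b 1 + ((v4 r 1:ℝ):Rmax)) ⊔ (b 2 + ((v4 r 2:ℝ):Rmax))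
        ⊔ (b 3 + ((v4 r 3:ℝ):Rmax)) := by
    intro r
    have h := hV (vgen_mem r)
    simp only [Set.mem_setOf_eq] at h
    rw [sup4, sup4] at h
    exact h
  have hg0 := hgen 0
  rw [show v4 0 0 = 1 from by norm_num [v4, fin3], show v4 0 1 = 2 from by norm_num [v4, fin3],
      show v4 0 2 = 3 from by norm_num [v4, fin3],
      show v4 0 3 = 4 from by norm_num [v4, fin3]] at hg0
  have hg1 := hgen 1
  rw [show v4 1 0 = 2 from by norm_num [v4, fin3], show v4 1 1 = 4 from by norm_num [v4, fin3],
      show v4 1 2 = 6 from by norm_num [v4, fin3],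
      show v4 1 3 = 8 from by norm_num [v4, fin3]] at hg1
  have hg3 := hgen 3
  rw [show v4 3 0 = 4 from by norm_num [v4, fin3], show v4 3 1 = 8 from by norm_num [v4, fin3],
      show v4 3 2 = 12 from by norm_num [v4, fin3],
      show v4 3 3 = 16 from by norm_num [v4, fin3]] at hg3
  -- Step B : a 0 ≤ b 0
  have hB : a 0 ≤ b 0 := by
    by_contra hB0'
    have hB0 : b 0 < a 0 := not_le.mp hB0'
    have hB1 : a 2 ≤ b 2 := by
      by_contra h2'
      have h2c : b 2 < a 2 := not_le.mp h2'
      have k0 := (add_coe_lt_add_coe 1 hB0).trans_le (le_sup4_0.trans hg0)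
      have k1 := (add_coe_lt_add_coe 2 hA1).trans_le (le_sup4_1.trans hg0)
      have k2 := (add_coe_lt_add_coe 3 h2c).trans_le (le_sup4_2.trans hg0)
      have k3 := (add_coe_lt_add_coe 4 hA3).trans_le (le_sup4_3.trans hg0)
      exact absurd (sup4_lt k0 k1 k2 k3) (lt_irrefl _)
    have k0 := (add_coe_lt_add_coe 1 hB0).trans_le (le_sup4_0.trans hg0)
    have k1 := (add_coe_lt_add_coe 2 hA1).trans_le (le_sup4_1.trans hg0)
    have k3 := (add_coe_lt_add_coe 4 hA3).trans_le (le_sup4_3.trans hg0)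
    have hs2 : a 1 + ((2:ℝ):Rmax) ≤ b 2 + ((3:ℝ):Rmax) :=
      (le_sup4_1.trans hg0).trans (sup4_le2 k0 k1 k3)
    rw [hA1e, ← WithBot.coe_add] at hs2
    have hb2ne : b 2 ≠ ⊥ := fun e => by
      rw [e, WithBot.bot_add] at hs2; exact absurd hs2 (by simp)
    obtain ⟨B2, hb2e⟩ : ∃ r : ℝ, b 2 = (r:Rmax) := by
      obtain ⟨r, hr⟩ := WithBot.ne_bot_iff_exists.mp hb2ne
      exact ⟨r, hr.symm⟩
    rw [hb2e, ← WithBot.coe_add, WithBot.coe_le_coe] at hs2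
    have hm := hmem ![⊥, ((B2 - A1:ℝ):Rmax), ((0:ℝ):Rmax), ⊥] (by
      simp only [mat0, mat1, mat2, mat3, WithBot.add_bot, bot_sup_eq, sup_bot_eq]
      apply sup_le
      · refine le_trans ?_ (le_sup_right : b 2 + _ ≤ _)
        rw [hA1e, hb2e, ← WithBot.coe_add, ← WithBot.coe_add, WithBot.coe_le_coe]
        linarith
      · exact le_trans (add_le_add hB1 le_rfl) le_sup_right)
    have hm' := hm
    simp only [Hs, Set.mem_setOf_eq, mat0, mat1, mat2, mat3, WithBot.add_bot,
      ← WithBot.coe_add] at hm'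
    rw [show max (((6 + (B2 - A1):ℝ)):Rmax) ⊥ = ((6 + (B2 - A1):ℝ):Rmax) from max_eq_left bot_le,
      show max (⊥:Rmax) ((δ + 4 + 0:ℝ):Rmax) = ((δ + 4 + 0:ℝ):Rmax) from max_eq_right bot_le,
      WithBot.coe_le_coe] at hm'
    linarith
  -- Step C : a 2 ≤ b 2
  have hC : a 2 ≤ b 2 := by
    by_contra hC'
    have hCc : b 2 < a 2 := not_le.mp hC'
    have k1 := (add_coe_lt_add_coe 8 hA1).trans_le (le_sup4_1.trans hg3)
    have k2 := (add_coe_lt_add_coe 12 hCc).trans_le (le_sup4_2.trans hg3)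
    have k3 := (add_coe_lt_add_coe 16 hA3).trans_le (le_sup4_3.trans hg3)
    have hs0 : a 3 + ((16:ℝ):Rmax) ≤ b 0 + ((4:ℝ):Rmax) :=
      (le_sup4_3.trans hg3).trans (sup4_le0 k1 k2 k3)
    rw [hA3e, ← WithBot.coe_add] at hs0
    have hb0ne : b 0 ≠ ⊥ := fun e => by
      rw [e, WithBot.bot_add] at hs0; exact absurd hs0 (by simp)
    obtain ⟨B0, hb0e⟩ : ∃ r : ℝ, b 0 = (r:Rmax) := by
      obtain ⟨r, hr⟩ := WithBot.ne_bot_iff_exists.mp hb0ne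
      exact ⟨r, hr.symm⟩
    rw [hb0e, ← WithBot.coe_add, WithBot.coe_le_coe] at hs0
    have hm := hmem ![((0:ℝ):Rmax), ⊥, ⊥, ((B0 - A3:ℝ):Rmax)] (by
      simp only [mat0, mat1, mat2, mat3, WithBot.add_bot, bot_sup_eq, sup_bot_eq]
      apply sup_le
      · exact le_trans (add_le_add hB le_rfl) le_sup_left
      · refine le_trans ?_ (le_sup_left : b 0 + _ ≤ _)
        rw [hA3e, hb0e, ← WithBot.coe_add, ← WithBot.coe_add, WithBot.coe_le_coe]
        linarith)
    simp only [Hs, Set.mem_setOf_eq, mat0, mat1, mat2, mat3, WithBot.add_bot,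
      ← WithBot.coe_add] at hm
    rw [show max (⊥:Rmax) ((δ + (B0 - A3):ℝ):Rmax) = ((δ + (B0 - A3):ℝ):Rmax) from
        max_eq_right bot_le,
      show max (((8 + 0:ℝ)):Rmax) ⊥ = ((8 + 0:ℝ):Rmax) from max_eq_left bot_le,
      WithBot.coe_le_coe] at hm
    linarith
  -- corner inequalities
  have hc1 : b 0 ≤ ((A1 + 2:ℝ):Rmax) := by
    by_contra hlt'
    have hlt : ((A1 + 2:ℝ):Rmax) < b 0 := not_le.mp hlt'
    obtain ⟨B0, hb0e⟩ : ∃ r : ℝ, b 0 = (r:Rmax) := by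
      obtain ⟨r, hr⟩ := WithBot.ne_bot_iff_exists.mp (bot_le.trans_lt hlt).ne'
      exact ⟨r, hr.symm⟩
    rw [hb0e, WithBot.coe_lt_coe] at hlt
    have hm := hmem ![((0:ℝ):Rmax), ((B0 - A1:ℝ):Rmax), ⊥, ⊥] (by
      simp only [mat0, mat1, mat2, mat3, WithBot.add_bot, bot_sup_eq, sup_bot_eq]
      apply sup_le
      · exact le_trans (add_le_add hB le_rfl) le_sup_left
      · refine le_trans ?_ (le_sup_left : b 0 + _ ≤ _)
        rw [hA1e, hb0e, ← WithBot.coe_add, ← WithBot.coe_add, WithBot.coe_le_coe]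
        linarith)
    simp only [Hs, Set.mem_setOf_eq, mat0, mat1, mat2, mat3, WithBot.add_bot,
      ← WithBot.coe_add] at hm
    rw [show max (((6 + (B0 - A1):ℝ)):Rmax) ⊥ = ((6 + (B0 - A1):ℝ):Rmax) from max_eq_left bot_le,
      show max (((8 + 0:ℝ)):Rmax) ⊥ = ((8 + 0:ℝ):Rmax) from max_eq_left bot_le,
      WithBot.coe_le_coe] at hm
    linarith
  have hc2 : b 2 ≤ ((A1 - 2 + δ:ℝ):Rmax) := by
    by_contra hlt'
    have hlt : ((A1 - 2 + δ:ℝ):Rmax) < b 2 := not_le.mp hlt'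
    obtain ⟨B2, hb2e⟩ : ∃ r : ℝ, b 2 = (r:Rmax) := by
      obtain ⟨r, hr⟩ := WithBot.ne_bot_iff_exists.mp (bot_le.trans_lt hlt).ne'
      exact ⟨r, hr.symm⟩
    rw [hb2e, WithBot.coe_lt_coe] at hlt
    have hm := hmem ![⊥, ((B2 - A1:ℝ):Rmax), ((0:ℝ):Rmax), ⊥] (by
      simp only [mat0, mat1, mat2, mat3, WithBot.add_bot, bot_sup_eq, sup_bot_eq]
      apply sup_le
      · refine le_trans ?_ (le_sup_right : b 2 + _ ≤ _)
        rw [hA1e, hb2e, ← WithBot.coe_add, ← WithBot.coe_add, WithBot.coe_le_coe]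
        linarith
      · exact le_trans (add_le_add hC le_rfl) le_sup_right)
    simp only [Hs, Set.mem_setOf_eq, mat0, mat1, mat2, mat3, WithBot.add_bot,
      ← WithBot.coe_add] at hm
    rw [show max (((6 + (B2 - A1):ℝ)):Rmax) ⊥ = ((6 + (B2 - A1):ℝ):Rmax) from max_eq_left bot_le,
      show max (⊥:Rmax) ((δ + 4 + 0:ℝ):Rmax) = ((δ + 4 + 0:ℝ):Rmax) from max_eq_right bot_le,
      WithBot.coe_le_coe] at hm
    linarith
  have hc3 : b 0 ≤ ((A3 + 8 - δ:ℝ):Rmax) := by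
    by_contra hlt'
    have hlt : ((A3 + 8 - δ:ℝ):Rmax) < b 0 := not_le.mp hlt'
    obtain ⟨B0, hb0e⟩ : ∃ r : ℝ, b 0 = (r:Rmax) := by
      obtain ⟨r, hr⟩ := WithBot.ne_bot_iff_exists.mp (bot_le.trans_lt hlt).ne'
      exact ⟨r, hr.symm⟩
    rw [hb0e, WithBot.coe_lt_coe] at hlt
    have hm := hmem ![((0:ℝ):Rmax), ⊥, ⊥, ((B0 - A3:ℝ):Rmax)] (by
      simp only [mat0, mat1, mat2, mat3, WithBot.add_bot, bot_sup_eq, sup_bot_eq]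
      apply sup_le
      · exact le_trans (add_le_add hB le_rfl) le_sup_left
      · refine le_trans ?_ (le_sup_left : b 0 + _ ≤ _)
        rw [hA3e, hb0e, ← WithBot.coe_add, ← WithBot.coe_add, WithBot.coe_le_coe]
        linarith)
    simp only [Hs, Set.mem_setOf_eq, mat0, mat1, mat2, mat3, WithBot.add_bot,
      ← WithBot.coe_add] at hm
    rw [show max (⊥:Rmax) ((δ + (B0 - A3):ℝ):Rmax) = ((δ + (B0 - A3):ℝ):Rmax) from
        max_eq_right bot_le,
      show max (((8 + 0:ℝ)):Rmax) ⊥ = ((8 + 0:ℝ):Rmax) from max_eq_left bot_le,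
      WithBot.coe_le_coe] at hm
    linarith
  have hc4 : b 2 ≤ ((A3 + 4:ℝ):Rmax) := by
    by_contra hlt'
    have hlt : ((A3 + 4:ℝ):Rmax) < b 2 := not_le.mp hlt'
    obtain ⟨B2, hb2e⟩ : ∃ r : ℝ, b 2 = (r:Rmax) := by
      obtain ⟨r, hr⟩ := WithBot.ne_bot_iff_exists.mp (bot_le.trans_lt hlt).ne'
      exact ⟨r, hr.symm⟩
    rw [hb2e, WithBot.coe_lt_coe] at hlt
    have hm := hmem ![⊥, ⊥, ((0:ℝ):Rmax), ((B2 - A3:ℝ):Rmax)] (by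
      simp only [mat0, mat1, mat2, mat3, WithBot.add_bot, bot_sup_eq, sup_bot_eq]
      apply sup_le
      · exact le_trans (add_le_add hC le_rfl) le_sup_left
      · refine le_trans ?_ (le_sup_left : b 2 + _ ≤ _)
        rw [hA3e, hb2e, ← WithBot.coe_add, ← WithBot.coe_add, WithBot.coe_le_coe]
        linarith)
    simp only [Hs, Set.mem_setOf_eq, mat0, mat1, mat2, mat3, WithBot.add_bot,
      ← WithBot.coe_add] at hm
    rw [show max (⊥:Rmax) ((δ + (B2 - A3):ℝ):Rmax) = ((δ + (B2 - A3):ℝ):Rmax) from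
        max_eq_right bot_le,
      show max (⊥:Rmax) ((δ + 4 + 0:ℝ):Rmax) = ((δ + 4 + 0:ℝ):Rmax) from max_eq_right bot_le,
      WithBot.coe_le_coe] at hm
    linarith
  -- endgame: determine b 0 and b 2
  have hb0e : b 0 = ((A1 + 2:ℝ):Rmax) := by
    have k1 := (add_coe_lt_add_coe 4 hA1).trans_le (le_sup4_1.trans hg1)
    have k3 := (add_coe_lt_add_coe 8 hA3).trans_le (le_sup4_3.trans hg1)
    have hr : a 1 + ((4:ℝ):Rmax) ≤ (b 0 + ((2:ℝ):Rmax)) ⊔ (b 2 + ((6:ℝ):Rmax)) :=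
      (le_sup4_1.trans hg1).trans (sup4_le02 k1 k3)
    rcases le_sup_iff.mp hr with hL | hR
    · -- a1 + 4 ≤ b0 + 2
      have hb0ne : b 0 ≠ ⊥ := fun e => by
        rw [e, WithBot.bot_add, hA1e, ← WithBot.coe_add] at hL
        exact absurd hL (by simp)
      obtain ⟨B0, he⟩ : ∃ r : ℝ, b 0 = (r:Rmax) := by
        obtain ⟨r, hr'⟩ := WithBot.ne_bot_iff_exists.mp hb0ne
        exact ⟨r, hr'.symm⟩
      rw [hA1e, he, ← WithBot.coe_add, ← WithBot.coe_add, WithBot.coe_le_coe] at hL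
      rw [he, WithBot.coe_le_coe] at hc1
      rw [he, WithBot.coe_eq_coe]
      linarith
    · -- a1 + 4 ≤ b2 + 6 : contradiction with hc2 and δ < 0
      exfalso
      have := hR.trans (add_le_add hc2 (le_refl ((6:ℝ):Rmax)))
      rw [hA1e, ← WithBot.coe_add, ← WithBot.coe_add, WithBot.coe_le_coe] at this
      linarith
  have hb2e : b 2 = ((A3 + 4:ℝ):Rmax) := by
    have k1 := (add_coe_lt_add_coe 8 hA1).trans_le (le_sup4_1.trans hg3)
    have k3 := (add_coe_lt_add_coe 16 hA3).trans_le (le_sup4_3.trans hg3)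
    have hr : a 3 + ((16:ℝ):Rmax) ≤ (b 0 + ((4:ℝ):Rmax)) ⊔ (b 2 + ((12:ℝ):Rmax)) :=
      (le_sup4_3.trans hg3).trans (sup4_le02 k1 k3)
    rcases le_sup_iff.mp hr with hL | hR
    · -- a3 + 16 ≤ b0 + 4 : contradiction
      exfalso
      have := hL.trans (add_le_add hc1 (le_refl ((4:ℝ):Rmax)))
      rw [hA3e, ← WithBot.coe_add, ← WithBot.coe_add, WithBot.coe_le_coe] at this
      -- A3 + 16 ≤ A1 + 2 + 4 ; with hc3 : b0 = A1+2 ≤ A3 + 8 - δ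
      have h3' := hc3
      rw [hb0e, WithBot.coe_le_coe] at h3'
      linarith
    · have hb2ne : b 2 ≠ ⊥ := fun e => by
        rw [e, WithBot.bot_add, hA3e, ← WithBot.coe_add] at hR
        exact absurd hR (by simp)
      obtain ⟨B2, he⟩ : ∃ r : ℝ, b 2 = (r:Rmax) := by
        obtain ⟨r, hr'⟩ := WithBot.ne_bot_iff_exists.mp hb2ne
        exact ⟨r, hr'.symm⟩
      rw [hA3e, he, ← WithBot.coe_add, ← WithBot.coe_add, WithBot.coe_le_coe] at hR
      rw [he, WithBot.coe_le_coe] at hc4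
      rw [he, WithBot.coe_eq_coe]
      linarith
  have hA3val : A3 = A1 - 6 + δ := by
    have l1 := hc2; rw [hb2e, WithBot.coe_le_coe] at l1
    have l2 := hc3; rw [hb0e, WithBot.coe_le_coe] at l2
    linarith
  -- final inclusion
  intro x hx
  simp only [Hs, Set.mem_setOf_eq] at hx
  have hx1 : ((6:ℝ):Rmax) + x 1 ≤ max (((8:ℝ):Rmax) + x 0) (((δ+4:ℝ):Rmax) + x 2) :=
    le_trans (le_max_left _ _) hx
  have hx3 : ((δ:ℝ):Rmax) + x 3 ≤ max (((8:ℝ):Rmax) + x 0) (((δ+4:ℝ):Rmax) + x 2) :=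
    le_trans (le_max_right _ _) hx
  simp only [Set.mem_setOf_eq]
  rw [sup4, sup4]
  refine sup_le (sup_le (sup_le ?_ ?_) ?_) ?_
  · exact le_trans (add_le_add hB le_rfl) le_sup4_0
  · rw [hA1e]
    rcases le_max_iff.mp hx1 with hL | hR
    · have := shift_le (A1 - 6) hL
      rw [show (6 + (A1 - 6):ℝ) = A1 from by ring, show (8 + (A1 - 6):ℝ) = A1 + 2 from by ring,
        ← hb0e] at this
      exact this.trans le_sup4_0
    · have := shift_le (A1 - 6) hR
      rw [show (6 + (A1 - 6):ℝ) = A1 from by ring,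
        show (δ + 4 + (A1 - 6):ℝ) = A3 + 4 from by rw [hA3val]; ring, ← hb2e] at this
      exact this.trans le_sup4_2
  · exact le_trans (add_le_add hC le_rfl) le_sup4_2
  · rw [hA3e]
    rcases le_max_iff.mp hx3 with hL | hR
    · have := shift_le (A1 - 6) hL
      rw [show (δ + (A1 - 6):ℝ) = A3 from by rw [hA3val]; ring,
        show (8 + (A1 - 6):ℝ) = A1 + 2 from by ring, ← hb0e] at this
      exact this.trans le_sup4_0
    · have := shift_le (A1 - 6) hR
      rw [show (δ + (A1 - 6):ℝ) = A3 from by rw [hA3val]; ring,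
        show (δ + 4 + (A1 - 6):ℝ) = A3 + 4 from by rw [hA3val]; ring, ← hb2e] at this
      exact this.trans le_sup4_2

lemma Hs_isHalfSpace (δ : ℝ) : IsHalfSpace (Hs δ) := by
  refine ⟨![⊥, ((6:ℝ):Rmax), ⊥, (δ:Rmax)], ![((8:ℝ):Rmax), ⊥, ((δ+4:ℝ):Rmax), ⊥], ?_⟩
  ext x
  simp only [Hs, Set.mem_setOf_eq]
  rw [sup4, sup4]
  simp [WithBot.bot_add]

lemma cone_sub_Hs (δ : ℝ) (h1 : -1 < δ) (h2 : δ < 0) : genCone v4 ⊆ Hs δ := by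
  rintro x ⟨lam, rfl⟩
  have step1 : ∀ r : Fin 4, ∀ l : Rmax,
      ((6:ℝ):Rmax) + (l + ((v4 r 1 : ℝ):Rmax)) ≤
        max (((8:ℝ):Rmax) + (l + ((v4 r 0:ℝ):Rmax))) (((δ+4:ℝ):Rmax) + (l + ((v4 r 2:ℝ):Rmax))) := by
    intro r l
    induction l using WithBot.recBotCoe with
    | bot => simp
    | coe l =>
      rw [← WithBot.coe_add, ← WithBot.coe_add, ← WithBot.coe_add, ← WithBot.coe_add,
        ← WithBot.coe_add, ← WithBot.coe_add, ← WithBot.coe_max, WithBot.coe_le_coe, le_max_iff]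
      fin_cases r <;> [left; left; right; right] <;>
        · norm_num [v4, fin3]; linarith
  have step2 : ∀ r : Fin 4, ∀ l : Rmax,
      ((δ:ℝ):Rmax) + (l + ((v4 r 3 : ℝ):Rmax)) ≤
        max (((8:ℝ):Rmax) + (l + ((v4 r 0:ℝ):Rmax))) (((δ+4:ℝ):Rmax) + (l + ((v4 r 2:ℝ):Rmax))) := by
    intro r l
    induction l using WithBot.recBotCoe with
    | bot => simp
    | coe l =>
      rw [← WithBot.coe_add, ← WithBot.coe_add, ← WithBot.coe_add, ← WithBot.coe_add,
        ← WithBot.coe_add, ← WithBot.coe_add, ← WithBot.coe_max, WithBot.coe_le_coe, le_max_iff]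
      fin_cases r <;> right <;>
        · norm_num [v4, fin3]; linarith
  simp only [Hs, Set.mem_setOf_eq]
  apply max_le
  · obtain ⟨r0, -, e⟩ := Finset.exists_mem_eq_sup Finset.univ ⟨0, Finset.mem_univ 0⟩
      (fun r => lam r + ((v4 r 1 : ℝ):Rmax))
    rw [e]
    exact (step1 r0 (lam r0)).trans (max_le_max
      (add_le_add le_rfl (Finset.le_sup (f := fun r => lam r + ((v4 r 0:ℝ):Rmax)) (Finset.mem_univ r0)))
      (add_le_add le_rfl (Finset.le_sup (f := fun r => lam r + ((v4 r 2:ℝ):Rmax)) (Finset.mem_univ r0))))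
  · obtain ⟨r0, -, e⟩ := Finset.exists_mem_eq_sup Finset.univ ⟨0, Finset.mem_univ 0⟩
      (fun r => lam r + ((v4 r 3 : ℝ):Rmax))
    rw [e]
    exact (step2 r0 (lam r0)).trans (max_le_max
      (add_le_add le_rfl (Finset.le_sup (f := fun r => lam r + ((v4 r 0:ℝ):Rmax)) (Finset.mem_univ r0)))
      (add_le_add le_rfl (Finset.le_sup (f := fun r => lam r + ((v4 r 2:ℝ):Rmax)) (Finset.mem_univ r0))))

lemma Hs_minimal (δ : ℝ) (h1 : -1 < δ) (h2 : δ < 0) :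
    IsMinimalHalfSpace (genCone v4) (Hs δ) := by
  refine ⟨Hs_isHalfSpace δ, cone_sub_Hs δ h1 h2, ?_⟩
  rintro ⟨H', ⟨a, b, rfl⟩, hVH', hss⟩
  obtain ⟨hsub', hne⟩ := ssubset_iff_subset_ne.mp hss
  exact hne (Set.Subset.antisymm hsub' (Hs_min δ h1 h2 a b hVH' hsub'))

lemma mem_Hs_iff (γ t : ℝ) :
    (![((0:ℝ):Rmax), ⊥, ⊥, ((t:ℝ):Rmax)]) ∈ Hs γ ↔ γ + t ≤ 8 + 0 := by
  simp only [Hs, Set.mem_setOf_eq, mat0, mat1, mat2, mat3, WithBot.add_bot, ← WithBot.coe_add]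
  rw [show max (⊥:Rmax) ((γ + t:ℝ):Rmax) = ((γ + t:ℝ):Rmax) from max_eq_right bot_le,
    show max (((8+0:ℝ)):Rmax) ⊥ = ((8+0:ℝ):Rmax) from max_eq_left bot_le, WithBot.coe_le_coe]

lemma Hs_ne {p q : ℝ} (h : p < q) : Hs p ≠ Hs q := by
  intro e
  have h1 : (![((0:ℝ):Rmax), ⊥, ⊥, (((8 - p:ℝ)):Rmax)]) ∈ Hs p :=
    (mem_Hs_iff p (8 - p)).mpr (by linarith)
  rw [e] at h1
  have := (mem_Hs_iff q (8 - p)).mp h1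
  linarith

/-- an infinite family of minimal half-spaces. -/
theorem stmt_13 :
    (∀ δ : ℝ, -1 < δ → δ < 0 →
      IsMinimalHalfSpace (genCone v4)
        {x : Fin 4 → Rmax |
          max (((6 : ℝ) : Rmax) + x 1) ((δ : Rmax) + x 3) ≤
            max (((8 : ℝ) : Rmax) + x 0) (((δ + 4 : ℝ) : Rmax) + x 2)}) ∧
    {H : Set (Fin 4 → Rmax) | IsMinimalHalfSpace (genCone v4) H}.Infinite :=
  by
  have key : ∀ δ : ℝ, -1 < δ → δ < 0 →
      IsMinimalHalfSpace (genCone v4)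
        {x : Fin 4 → Rmax |
          max (((6 : ℝ) : Rmax) + x 1) ((δ : Rmax) + x 3) ≤
            max (((8 : ℝ) : Rmax) + x 0) (((δ + 4 : ℝ) : Rmax) + x 2)} :=
    fun δ h1 h2 => Hs_minimal δ h1 h2
  refine ⟨key, ?_⟩
  have hinf : (Set.Ioo (-1:ℝ) 0).Infinite := Set.Ioo_infinite (by norm_num)
  have hinj : Set.InjOn (fun δ : ℝ => Hs δ) (Set.Ioo (-1:ℝ) 0) := by
    intro p _ q _ e
    by_contra hne
    rcases Ne.lt_or_gt hne with h | h
    · exact Hs_ne h e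
    · exact Hs_ne h e.symm
  refine ((hinf.image hinj).mono ?_)
  rintro _ ⟨δ, hδ, rfl⟩
  exact Hs_minimal δ hδ.1 hδ.2
end
end

section
/- Let V ⊆ ℝ_max^n be the max-plus cone generated by vectors v^1,...,v^p ∈ ℝ^n (all entries finite), and let y ∈ ℝ^n be a vector not belonging to V. Then there exists a half-space H containing V but not y whose apex is a vertex of the natural cell decomposition of ℝ_max^n induced by v^1,...,v^p. -/
noncomputable section

namespace Stmt14
set_option linter.unusedSectionVars false

open Finset

variable {n p : ℕ} [Nonempty (Fin n)] [Nonempty (Fin p)]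

def M (v : Fin p → Fin n → ℝ) (x : Fin n → ℝ) (r : Fin p) : ℝ :=
  Finset.univ.sup' Finset.univ_nonempty (fun k => v r k - x k)

def A (v : Fin p → Fin n → ℝ) (x : Fin n → ℝ) (r : Fin p) : Finset (Fin n) :=
  @Finset.filter _ (fun k => v r k - x k = M v x r) (Classical.decPred _) Finset.univ

def mB (y x : Fin n → ℝ) : ℝ :=
  Finset.univ.sup' Finset.univ_nonempty (fun k => y k - x k)

def B (y x : Fin n → ℝ) : Finset (Fin n) :=
  @Finset.filter _ (fun k => y k - x k = mB y x) (Classical.decPred _) Finset.univ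

lemma mem_A {v : Fin p → Fin n → ℝ} {x : Fin n → ℝ} {r : Fin p} {k : Fin n} :
    k ∈ A v x r ↔ v r k - x k = M v x r := by
  simp [A, Finset.mem_filter]

lemma le_M (v : Fin p → Fin n → ℝ) (x : Fin n → ℝ) (r : Fin p) (k : Fin n) :
    v r k - x k ≤ M v x r := Finset.le_sup' (fun k => v r k - x k) (mem_univ k)

lemma A_nonempty (v : Fin p → Fin n → ℝ) (x : Fin n → ℝ) (r : Fin p) :
    (A v x r).Nonempty := by
  obtain ⟨k, -, hk⟩ := Finset.exists_mem_eq_sup' Finset.univ_nonempty (fun k => v r k - x k)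
  exact ⟨k, mem_A.2 hk.symm⟩

lemma lt_M {v : Fin p → Fin n → ℝ} {x : Fin n → ℝ} {r : Fin p} {k : Fin n}
    (h : k ∉ A v x r) : v r k - x k < M v x r :=
  lt_of_le_of_ne (le_M v x r k) (fun he => h (mem_A.2 he))

lemma mem_B {y x : Fin n → ℝ} {k : Fin n} : k ∈ B y x ↔ y k - x k = mB y x := by
  simp [B, Finset.mem_filter]

lemma le_mB (y x : Fin n → ℝ) (k : Fin n) : y k - x k ≤ mB y x :=
  Finset.le_sup' (fun k => y k - x k) (mem_univ k)

lemma B_nonempty (y x : Fin n → ℝ) : (B y x).Nonempty := by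
  obtain ⟨k, -, hk⟩ := Finset.exists_mem_eq_sup' Finset.univ_nonempty (fun k => y k - x k)
  exact ⟨k, mem_B.2 hk.symm⟩

lemma mem_typeSet_iff {v : Fin p → Fin n → ℝ} {x : Fin n → ℝ} {j : Fin n} {r : Fin p} :
    r ∈ typeSet v x j ↔ j ∈ A v x r := by
  rw [mem_A]
  unfold typeSet M
  rw [Finset.sup'_univ_eq_ciSup]
  exact Iff.rfl

def rel (v : Fin p → Fin n → ℝ) (x : Fin n → ℝ) : Fin n → Fin n → Prop :=
  Relation.ReflTransGen (fun j k => ∃ r, j ∈ A v x r ∧ k ∈ A v x r)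

def Connected (v : Fin p → Fin n → ℝ) (x : Fin n → ℝ) : Prop :=
  ∀ j k, rel v x j k

lemma rel_symm {v : Fin p → Fin n → ℝ} {x : Fin n → ℝ} {j k : Fin n} :
    rel v x j k → rel v x k j :=
  fun h => (@Relation.ReflTransGen.stdSymm _ _ ⟨fun _ _ ⟨r, h1, h2⟩ => ⟨r, h2, h1⟩⟩).symm _ _ h

def Inv (v : Fin p → Fin n → ℝ) (y x : Fin n → ℝ) (I J : Finset (Fin n)) : Prop :=
  Disjoint I J ∧ I ∪ J = Finset.univ ∧ (∀ r, (A v x r ∩ J).Nonempty) ∧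
    (∀ k, k ∈ B y x → k ∈ I)

-- ==== chunk 2 ====

lemma sup'_sub_const (f : Fin n → ℝ) (c : ℝ) :
    Finset.univ.sup' Finset.univ_nonempty (fun k => f k - c)
      = Finset.univ.sup' Finset.univ_nonempty f - c := by
  apply le_antisymm
  · exact Finset.sup'_le _ _ fun k _ =>
      sub_le_sub_right (Finset.le_sup' f (mem_univ k)) c
  · obtain ⟨k, -, hk⟩ := Finset.exists_mem_eq_sup' Finset.univ_nonempty f
    rw [hk]
    exact Finset.le_sup' (fun k => f k - c) (mem_univ k)

lemma vertex_of_connected {v : Fin p → Fin n → ℝ} {x : Fin n → ℝ} (h : Connected v x) :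
    IsVertex v x := by
  apply Set.Subset.antisymm
  · intro z hz
    have key : ∀ j k : Fin n, rel v x j k → z j - x j = z k - x k := by
      intro j k hjk
      induction hjk with
      | refl => rfl
      | tail hab hbc ih =>
        obtain ⟨r, hb, hc⟩ := hbc
        have h1 := hz _ (mem_typeSet_iff.2 hb)
        have h2 := hz _ (mem_typeSet_iff.2 hc)
        simp only [typeSet, Set.mem_setOf_eq] at h1 h2
        have e1 : v r _ - z _ = v r _ - z _ := h1.trans h2.symm
        have e2 := (mem_A.1 hb).trans (mem_A.1 hc).symm
        rw [ih]
        linarith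
    have j0 : Fin n := Classical.arbitrary (Fin n)
    refine ⟨z j0 - x j0, funext fun i => ?_⟩
    have hk := key j0 i (h j0 i)
    linarith
  · rintro z ⟨c, rfl⟩
    intro j r hr
    simp only [typeSet, Set.mem_setOf_eq] at hr ⊢
    have hfun : ∀ (w : Fin n → ℝ) (k : Fin n), v r k - (c + w k) = (v r k - w k) - c :=
      fun w k => by ring
    rw [← Finset.sup'_univ_eq_ciSup] at hr ⊢
    calc v r j - (c + x j) = (v r j - x j) - c := by ring
    _ = _ := by
        rw [hr]
        rw [show (fun k => v r k - (c + x k)) = fun k => (v r k - x k) - c from funext fun k => by ring]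
        rw [sup'_sub_const]


-- ==== chunk 3 ====

lemma subset_halfspace {v : Fin p → Fin n → ℝ} {y x : Fin n → ℝ} {I J : Finset (Fin n)}
    (hinv : Inv v y x I J) :
    genCone v ⊆ halfSpace I J (fun i => -(x i)) := by
  rintro z ⟨lam, rfl⟩
  simp only [halfSpace, Set.mem_setOf_eq]
  apply Finset.sup_le
  intro i hi
  obtain ⟨r0, -, hr0⟩ := Finset.exists_mem_eq_sup univ univ_nonempty
    (fun r => lam r + ((v r i : ℝ) : Rmax))
  show ((-(x i) : ℝ) : Rmax) + (univ.sup fun r => lam r + ((v r i : ℝ) : Rmax)) ≤ _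
  rw [hr0]
  obtain ⟨j, hj⟩ := hinv.2.2.1 r0
  rw [mem_inter] at hj
  refine le_trans ?_ (Finset.le_sup
    (f := fun j => ((-(x j) : ℝ) : Rmax) + univ.sup fun r => lam r + ((v r j : ℝ) : Rmax)) hj.2)
  have hle2 : lam r0 + ((v r0 j : ℝ) : Rmax) ≤
      univ.sup (fun r => lam r + ((v r j : ℝ) : Rmax)) :=
    Finset.le_sup (f := fun r => lam r + ((v r j : ℝ) : Rmax)) (mem_univ r0)
  refine le_trans ?_ (add_le_add_right hle2 _)
  induction lam r0 using WithBot.recBotCoe with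
  | bot => simp
  | coe l =>
    have hij : v r0 i - x i ≤ v r0 j - x j := by
      rw [mem_A.1 hj.1]; exact le_M v x r0 i
    have : -(x i) + (l + v r0 i) ≤ -(x j) + (l + v r0 j) := by linarith
    exact_mod_cast this

lemma not_mem_halfspace {v : Fin p → Fin n → ℝ} {y x : Fin n → ℝ} {I J : Finset (Fin n)}
    (hinv : Inv v y x I J) :
    (fun i => ((y i : ℝ) : Rmax)) ∉ halfSpace I J (fun i => -(x i)) := by
  intro hmem
  simp only [halfSpace, Set.mem_setOf_eq] at hmem
  obtain ⟨b, hb⟩ := B_nonempty y x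
  have hbI : b ∈ I := hinv.2.2.2 b hb
  have h1 : ((mB y x : ℝ) : Rmax) ≤ I.sup (fun i => ((-(x i) : ℝ) : Rmax) + ((y i : ℝ) : Rmax)) := by
    refine le_trans ?_ (Finset.le_sup hbI)
    have hhb : mB y x = -(x b) + y b := by have := mem_B.1 hb; linarith
    rw [hhb]
    exact_mod_cast le_refl _
  have hJne : J.Nonempty := by
    obtain ⟨j, hj⟩ := hinv.2.2.1 (Classical.arbitrary (Fin p))
    exact ⟨j, (mem_inter.1 hj).2⟩
  obtain ⟨j1, hj1, hj1e⟩ := Finset.exists_mem_eq_sup J hJne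
    (fun j => ((-(x j) : ℝ) : Rmax) + ((y j : ℝ) : Rmax))
  have hlt : y j1 - x j1 < mB y x := by
    refine lt_of_le_of_ne (le_mB y x j1) (fun he => ?_)
    have : j1 ∈ I := hinv.2.2.2 j1 (mem_B.2 he)
    exact (Finset.disjoint_left.1 hinv.1 this) hj1
  have hchain := le_trans h1 (le_trans hmem (le_of_eq hj1e))
  rw [← WithBot.coe_add, WithBot.coe_le_coe] at hchain
  linarith


-- ==== chunk 4 : init ====

lemma init {v : Fin p → Fin n → ℝ} {y : Fin n → ℝ}
    (hy : (fun i => ((y i : ℝ) : Rmax)) ∉ genCone v) :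
    ∃ x I J, Inv v y x I J := by
  set lam0 : Fin p → ℝ := fun r => Finset.univ.inf' Finset.univ_nonempty (fun k => y k - v r k)
    with hlam0
  set Py : Fin n → ℝ := fun k => Finset.univ.sup' Finset.univ_nonempty (fun r => lam0 r + v r k)
    with hPydef
  have hPy_le : ∀ k, Py k ≤ y k := by
    intro k
    apply Finset.sup'_le
    intro r _
    have h2 : lam0 r ≤ y k - v r k := Finset.inf'_le (fun k => y k - v r k) (mem_univ k)
    linarith
  have hle_Py : ∀ (r : Fin p) (k : Fin n), lam0 r + v r k ≤ Py k := fun r k =>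
    Finset.le_sup' (fun r => lam0 r + v r k) (mem_univ r)
  set I := Finset.filter (fun i => Py i < y i) Finset.univ with hI
  set J := Finset.univ \ I with hJ
  have hmemJ : ∀ k, k ∈ J ↔ ¬ Py k < y k := by
    intro k
    rw [hJ, Finset.mem_sdiff, hI, Finset.mem_filter]
    simp [mem_univ]
  refine ⟨Py, I, J, ?_, ?_, ?_, ?_⟩
  · exact Finset.disjoint_sdiff
  · exact Finset.union_sdiff_of_subset (Finset.subset_univ I)
  · intro r
    obtain ⟨k, -, hk⟩ := Finset.exists_mem_eq_inf' (Finset.univ_nonempty) (fun k => y k - v r k)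
    have hlamr : lam0 r = y k - v r k := hk
    have h1 : Py k = y k := by
      have := hle_Py r k
      rw [hlamr] at this
      have h2 := hPy_le k
      linarith
    have h2 : k ∈ A v Py r := by
      rw [mem_A]
      apply le_antisymm (le_M v Py r k)
      apply Finset.sup'_le
      intro k' _
      have ha := hle_Py r k'
      have : v r k' - Py k' ≤ -lam0 r := by linarith
      rw [hlamr] at this
      rw [h1]
      linarith
    refine ⟨k, Finset.mem_inter.2 ⟨h2, ?_⟩⟩
    rw [hmemJ]
    rw [h1]
    exact lt_irrefl _
  · intro k hk
    have hne : ∃ i, Py i < y i := by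
      by_contra hcon
      push_neg at hcon
      apply hy
      refine ⟨fun r => ((lam0 r : ℝ) : Rmax), ?_⟩
      funext i
      have hPyi : Py i = y i := le_antisymm (hPy_le i) (hcon i)
      show ((y i : ℝ) : Rmax) = _
      rw [← hPyi]
      show ((Finset.univ.sup' Finset.univ_nonempty (fun r => lam0 r + v r i) : ℝ) : Rmax) = _
      rw [Finset.coe_sup']
      apply Finset.sup_congr rfl
      intro r _
      exact WithBot.coe_add _ _
    obtain ⟨i0, hi0⟩ := hne
    have hpos : 0 < mB y Py :=
      lt_of_lt_of_le (by linarith : (0:ℝ) < y i0 - Py i0) (le_mB y Py i0)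
    have hkk := mem_B.1 hk
    rw [hI, Finset.mem_filter]
    exact ⟨Finset.mem_univ k, by linarith⟩



lemma doMove {v : Fin p → Fin n → ℝ} {y x : Fin n → ℝ} {I J : Finset (Fin n)}
    {C : Finset (Fin n)}
    (hinv : Inv v y x I J) (hC : C.Nonempty)
    (H1 : ∀ r, (A v x r ∩ C).Nonempty → A v x r ⊆ C)
    (hR : ∃ r, A v x r ∩ C = ∅)
    (hsafe : (B y x ∩ C).Nonempty ∨ ↑C ⊆ (↑I : Set (Fin n))) :
    ∃ x', Inv v y x' I J ∧
      ∑ r, (A v x r).card < ∑ r, (A v x' r).card := by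
  classical
  set R := Finset.filter (fun r => A v x r ∩ C = ∅) Finset.univ with hRdef
  have hRne : R.Nonempty := by
    obtain ⟨r, hr⟩ := hR
    exact ⟨r, Finset.mem_filter.2 ⟨mem_univ r, hr⟩⟩
  set supC : Fin p → ℝ := fun r => C.sup' hC (fun k => v r k - x k) with hsupC
  set t := R.inf' hRne (fun r => M v x r - supC r) with htdef
  have hmemR : ∀ r ∈ R, A v x r ∩ C = ∅ := fun r hr => (Finset.mem_filter.1 hr).2
  have ht : 0 < t := by
    rw [htdef, Finset.lt_inf'_iff]
    intro r hr
    obtain ⟨k, hkC, hke⟩ := Finset.exists_mem_eq_sup' hC (fun k => v r k - x k)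
    have hknA : k ∉ A v x r := by
      intro hkA
      have : k ∈ A v x r ∩ C := Finset.mem_inter.2 ⟨hkA, hkC⟩
      rw [hmemR r hr] at this
      exact absurd this (Finset.notMem_empty k)
    have := lt_M hknA
    have hs : supC r = v r k - x k := hke
    linarith
  set x' : Fin n → ℝ := fun k => if k ∈ C then x k - t else x k with hx'def
  have hval : ∀ (w : Fin n → ℝ) (k : Fin n),
      w k - x' k = if k ∈ C then w k - x k + t else w k - x k := by
    intro w k
    rw [hx'def]
    by_cases h : k ∈ C <;> simp [h] <;> ring
  have ht_le : ∀ r ∈ R, ∀ k ∈ C, v r k - x k + t ≤ M v x r := by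
    intro r hr k hk
    have h1 : t ≤ M v x r - supC r := Finset.inf'_le (fun r => M v x r - supC r) hr
    have h2 : v r k - x k ≤ supC r := Finset.le_sup' (fun k => v r k - x k) hk
    linarith
  -- M values for x'
  have hM1 : ∀ r ∈ R, M v x' r = M v x r := by
    intro r hr
    apply le_antisymm
    · apply Finset.sup'_le
      intro k _
      rw [hval]
      by_cases h : k ∈ C
      · simpa [h] using ht_le r hr k h
      · simpa [h] using le_M v x r k
    · obtain ⟨j, hj⟩ := A_nonempty v x r
      have hjC : j ∉ C := by
        intro hjC
        have : j ∈ A v x r ∩ C := Finset.mem_inter.2 ⟨hj, hjC⟩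
        rw [hmemR r hr] at this
        exact absurd this (Finset.notMem_empty j)
      have : v r j - x' j = M v x r := by rw [hval]; simp [hjC]; exact mem_A.1 hj
      rw [← this]
      exact le_M v x' r j
  have hM2 : ∀ r ∉ R, M v x' r = M v x r + t := by
    intro r hr
    have hne : (A v x r ∩ C).Nonempty := by
      rw [hRdef, Finset.mem_filter] at hr
      push_neg at hr
      exact hr (mem_univ r)
    have hsub : A v x r ⊆ C := H1 r hne
    apply le_antisymm
    · apply Finset.sup'_le
      intro k _
      rw [hval]
      by_cases h : k ∈ C
      · simp only [if_pos h]
        have := le_M v x r k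
        linarith
      · simp only [if_neg h]
        have := le_M v x r k
        linarith
    · obtain ⟨j, hj⟩ := A_nonempty v x r
      have hjC : j ∈ C := hsub hj
      have : v r j - x' j = M v x r + t := by
        rw [hval]; simp only [if_pos hjC]; rw [mem_A.1 hj]
      rw [← this]
      exact le_M v x' r j
  -- A grows
  have hAsub : ∀ r, A v x r ⊆ A v x' r := by
    intro r k hk
    by_cases hr : r ∈ R
    · have hkC : k ∉ C := by
        intro hkC
        have : k ∈ A v x r ∩ C := Finset.mem_inter.2 ⟨hk, hkC⟩
        rw [hmemR r hr] at this
        exact absurd this (Finset.notMem_empty k)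
      rw [mem_A, hval, if_neg hkC, hM1 r hr]
      exact mem_A.1 hk
    · have hne : (A v x r ∩ C).Nonempty := by
        rw [hRdef, Finset.mem_filter] at hr
        push_neg at hr
        exact hr (mem_univ r)
      have hkC : k ∈ C := H1 r hne hk
      rw [mem_A, hval, if_pos hkC, hM2 r hr, mem_A.1 hk]
  -- strict growth at the minimizer
  have hstrict : ∃ r, A v x r ⊂ A v x' r := by
    obtain ⟨r0, hr0R, hr0e⟩ := Finset.exists_mem_eq_inf' hRne (fun r => M v x r - supC r)
    obtain ⟨k0, hk0C, hk0e⟩ := Finset.exists_mem_eq_sup' hC (fun k => v r0 k - x k)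
    have hk0nA : k0 ∉ A v x r0 := by
      intro hkA
      have : k0 ∈ A v x r0 ∩ C := Finset.mem_inter.2 ⟨hkA, hk0C⟩
      rw [hmemR r0 hr0R] at this
      exact absurd this (Finset.notMem_empty k0)
    have hk0A' : k0 ∈ A v x' r0 := by
      rw [mem_A, hval, if_pos hk0C, hM1 r0 hr0R]
      have hs : supC r0 = v r0 k0 - x k0 := hk0e
      have htv : t = M v x r0 - supC r0 := hr0e
      rw [htv, hs]
      ring
    refine ⟨r0, Finset.ssubset_iff_of_subset (hAsub r0) |>.2 ⟨k0, hk0A', hk0nA⟩⟩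
  refine ⟨x', ⟨hinv.1, hinv.2.1, ?_, ?_⟩, ?_⟩
  · intro r
    obtain ⟨j, hj⟩ := hinv.2.2.1 r
    rw [Finset.mem_inter] at hj
    exact ⟨j, Finset.mem_inter.2 ⟨hAsub r hj.1, hj.2⟩⟩
  · -- B-safety
    rcases hsafe with ⟨b, hb⟩ | hCI
    · rw [Finset.mem_inter] at hb
      have hmB' : mB y x' = mB y x + t := by
        apply le_antisymm
        · apply Finset.sup'_le
          intro k _
          rw [hval]
          by_cases h : k ∈ C
          · simp only [if_pos h]
            have := le_mB y x k
            linarith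
          · simp only [if_neg h]
            have := le_mB y x k
            linarith
        · have : y b - x' b = mB y x + t := by
            rw [hval, if_pos hb.2, mem_B.1 hb.1]
          rw [← this]
          exact le_mB y x' b
      intro k hk
      have hkv := mem_B.1 hk
      rw [hval] at hkv
      by_cases h : k ∈ C
      · rw [if_pos h] at hkv
        rw [hmB'] at hkv
        have : k ∈ B y x := mem_B.2 (by linarith)
        exact hinv.2.2.2 k this
      · rw [if_neg h] at hkv
        rw [hmB'] at hkv
        have := le_mB y x k
        linarith
    · intro k hk
      by_cases h : k ∈ C
      · exact hCI h
      · have hkv := mem_B.1 hk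
        rw [hval, if_neg h] at hkv
        have hmono : mB y x ≤ mB y x' := by
          obtain ⟨b0, hb0⟩ := B_nonempty y x
          have h1 : y b0 - x b0 ≤ y b0 - x' b0 := by
            rw [hval]
            by_cases hb0C : b0 ∈ C
            · rw [if_pos hb0C]; linarith
            · rw [if_neg hb0C]
          calc mB y x = y b0 - x b0 := (mem_B.1 hb0).symm
          _ ≤ y b0 - x' b0 := h1
          _ ≤ mB y x' := le_mB y x' b0
        have h2 := le_mB y x k
        have : k ∈ B y x := mem_B.2 (by linarith)
        exact hinv.2.2.2 k this
  · obtain ⟨r0, hss⟩ := hstrict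
    exact Finset.sum_lt_sum (fun r _ => Finset.card_le_card (hAsub r))
      ⟨r0, mem_univ r0, Finset.card_lt_card hss⟩


-- ==== chunk 6 : progress and induction ====

lemma sum_card_le (v : Fin p → Fin n → ℝ) (x : Fin n → ℝ) :
    ∑ r, (A v x r).card ≤ p * n := by
  calc ∑ r, (A v x r).card ≤ ∑ _r : Fin p, n :=
        Finset.sum_le_sum (fun r _ => by simpa using Finset.card_le_univ (A v x r))
  _ = p * n := by simp [Finset.sum_const, Finset.card_univ, mul_comm]

/-- measure of a configuration -/
def mu (v : Fin p → Fin n → ℝ) (x : Fin n → ℝ) (J : Finset (Fin n)) : ℕ :=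
  (p * n - ∑ r, (A v x r).card) * (n + 1) + J.card

lemma stepA {v : Fin p → Fin n → ℝ} {y x : Fin n → ℝ} {I J : Finset (Fin n)}
    (hinv : Inv v y x I J) {j : Fin n} (hjJ : j ∈ J) (hjun : ∀ r, j ∉ A v x r) :
    Inv v y x (insert j I) (J.erase j) := by
  refine ⟨?_, ?_, ?_, ?_⟩
  · rw [Finset.disjoint_left]
    intro k hk hk'
    rcases Finset.mem_insert.1 hk with rfl | hkI
    · exact absurd hk' (Finset.notMem_erase k J)
    · exact (Finset.disjoint_left.1 hinv.1 hkI) (Finset.mem_of_mem_erase hk')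
  · apply Finset.eq_univ_of_forall
    intro k
    by_cases hkj : k = j
    · subst hkj
      exact Finset.mem_union_left _ (Finset.mem_insert_self k I)
    · have : k ∈ I ∪ J := by rw [hinv.2.1]; exact Finset.mem_univ k
      rcases Finset.mem_union.1 this with h | h
      · exact Finset.mem_union_left _ (Finset.mem_insert_of_mem h)
      · exact Finset.mem_union_right _ (Finset.mem_erase.2 ⟨hkj, h⟩)
  · intro r
    obtain ⟨k, hk⟩ := hinv.2.2.1 r
    rw [Finset.mem_inter] at hk
    have hkj : k ≠ j := fun he => hjun r (he ▸ hk.1)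
    exact ⟨k, Finset.mem_inter.2 ⟨hk.1, Finset.mem_erase.2 ⟨hkj, hk.2⟩⟩⟩
  · intro k hk
    exact Finset.mem_insert_of_mem (hinv.2.2.2 k hk)

lemma progress {v : Fin p → Fin n → ℝ} {y x : Fin n → ℝ} {I J : Finset (Fin n)}
    (hinv : Inv v y x I J) (hconn : ¬ Connected v x) :
    ∃ x' I' J', Inv v y x' I' J' ∧ mu v x' J' < mu v x J := by
  classical
  by_cases hA : ∃ j ∈ J, ∀ r, j ∉ A v x r
  · obtain ⟨j, hjJ, hjun⟩ := hA
    refine ⟨x, insert j I, J.erase j, stepA hinv hjJ hjun, ?_⟩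
    unfold mu
    exact Nat.add_lt_add_left (Finset.card_erase_lt_of_mem hjJ) _
  · push_neg at hA
    have key : ∃ C : Finset (Fin n), C.Nonempty ∧
        (∀ r, (A v x r ∩ C).Nonempty → A v x r ⊆ C) ∧
        (∃ r, A v x r ∩ C = ∅) ∧
        ((B y x ∩ C).Nonempty ∨ ↑C ⊆ (↑I : Set (Fin n))) := by
      by_cases hcase : ∃ b ∈ B y x, ∃ r, ∀ k, rel v x b k → k ∉ A v x r
      · obtain ⟨b, hbB, r1, hr1⟩ := hcase
        set C := @Finset.filter _ (fun k => rel v x b k) (Classical.decPred _) Finset.univ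
          with hCdef
        have hmemC : ∀ k, k ∈ C ↔ rel v x b k := by
          intro k
          rw [hCdef, Finset.mem_filter]
          simp [Finset.mem_univ]
        have hbC : b ∈ C := (hmemC b).2 Relation.ReflTransGen.refl
        refine ⟨C, ⟨b, hbC⟩, ?_, ⟨r1, ?_⟩, Or.inl ⟨b, Finset.mem_inter.2 ⟨hbB, hbC⟩⟩⟩
        · intro r hne k' hk'
          obtain ⟨k, hk⟩ := hne
          rw [Finset.mem_inter] at hk
          have hrelbk : rel v x b k := (hmemC k).1 hk.2
          exact (hmemC k').2 (hrelbk.trans (Relation.ReflTransGen.single ⟨r, hk.1, hk'⟩))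
        · rw [Finset.eq_empty_iff_forall_notMem]
          intro k hk
          rw [Finset.mem_inter] at hk
          exact hr1 k ((hmemC k).1 hk.2) hk.1
      · push_neg at hcase
        obtain ⟨b0, hb0⟩ := B_nonempty y x
        have hnotall : ¬ ∀ k, rel v x b0 k := by
          intro hall
          exact hconn (fun j k => (rel_symm (hall j)).trans (hall k))
        push_neg at hnotall
        obtain ⟨j, hj⟩ := hnotall
        have hjun : ∀ r, j ∉ A v x r := by
          intro r hjA
          obtain ⟨k, hk1, hk2⟩ := hcase b0 hb0 r
          exact hj (hk1.trans (Relation.ReflTransGen.single ⟨r, hk2, hjA⟩))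
        have hjI : j ∈ I := by
          have : j ∈ I ∪ J := by rw [hinv.2.1]; exact Finset.mem_univ j
          rcases Finset.mem_union.1 this with h | h
          · exact h
          · obtain ⟨r, hr⟩ := hA j h
            exact absurd hr (hjun r)
        refine ⟨{j}, Finset.singleton_nonempty j, ?_, ?_, Or.inr ?_⟩
        · intro r hne
          obtain ⟨k, hk⟩ := hne
          rw [Finset.mem_inter, Finset.mem_singleton] at hk
          exact absurd (hk.2 ▸ hk.1) (hjun r)
        · refine ⟨Classical.arbitrary (Fin p), ?_⟩
          rw [Finset.eq_empty_iff_forall_notMem]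
          intro k hk
          rw [Finset.mem_inter, Finset.mem_singleton] at hk
          exact hjun _ (hk.2 ▸ hk.1)
        · intro k hk
          rw [Finset.coe_singleton, Set.mem_singleton_iff] at hk
          exact hk ▸ hjI
    obtain ⟨C, hC, H1, hR, hsafe⟩ := key
    obtain ⟨x', hinv', hsum⟩ := doMove hinv hC H1 hR hsafe
    refine ⟨x', I, J, hinv', ?_⟩
    unfold mu
    apply Nat.add_lt_add_right
    apply Nat.mul_lt_mul_of_pos_right _ (Nat.succ_pos n)
    have h1 := sum_card_le v x'
    omega

lemma improve {v : Fin p → Fin n → ℝ} {y : Fin n → ℝ} :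
    ∀ (m : ℕ) (x : Fin n → ℝ) (I J : Finset (Fin n)),
      Inv v y x I J → mu v x J ≤ m →
      ∃ x' I' J', Inv v y x' I' J' ∧ Connected v x' := by
  intro m
  induction m using Nat.strong_induction_on with
  | _ m ih =>
    intro x I J hinv hm
    by_cases hconn : Connected v x
    · exact ⟨x, I, J, hinv, hconn⟩
    · obtain ⟨x', I', J', hinv', hlt⟩ := progress hinv hconn
      exact ih (mu v x' J') (lt_of_lt_of_le hlt hm) x' I' J' hinv' (le_refl _)

end Stmt14

/-- a point not in the cone can be separated from it by a
half-space whose apex is a vertex of the natural cell decomposition. -/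
theorem stmt_14 {n p : ℕ} (hp : 0 < p) (v : Fin p → Fin n → ℝ) (y : Fin n → ℝ)
    (hy : (fun i => ((y i : ℝ) : Rmax)) ∉ genCone v) :
    ∃ (I J : Finset (Fin n)) (a : Fin n → ℝ), Disjoint I J ∧ I ∪ J = Finset.univ ∧
      genCone v ⊆ halfSpace I J a ∧
      (fun i => ((y i : ℝ) : Rmax)) ∉ halfSpace I J a ∧
      IsVertex v (-a) := by
  classical
  rcases Nat.eq_zero_or_pos n with hn | hn
  · subst hn
    exact absurd ⟨fun _ => (0 : Rmax), funext fun i => i.elim0⟩ hy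
  · haveI : Nonempty (Fin n) := ⟨⟨0, hn⟩⟩
    haveI : Nonempty (Fin p) := ⟨⟨0, hp⟩⟩
    obtain ⟨x0, I0, J0, hinv0⟩ := Stmt14.init hy
    obtain ⟨x, I, J, hinv, hconn⟩ :=
      Stmt14.improve (Stmt14.mu v x0 J0) x0 I0 J0 hinv0 (le_refl _)
    refine ⟨I, J, fun i => -(x i), hinv.1, hinv.2.1, Stmt14.subset_halfspace hinv,
      Stmt14.not_mem_halfspace hinv, ?_⟩
    have hax : -(fun i => -(x i)) = x := by funext i; simp
    rw [hax]
    exact Stmt14.vertex_of_connected hconn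
end
end

section
/- Fix a ∈ ℝ^n. Any family of pairwise incomparable (for inclusion) half-spaces of ℝ_max^n all having apex −a has at most C(n, ⌊n/2⌋) members, and this bound is attained: there are exactly C(n, ⌊n/2⌋) maximal pairwise-incomparable half-spaces with apex −a, where C(n,k) denotes the binomial coefficient. -/
noncomputable section

/-- `H` is a half-space of `ℝ_max^n` with apex `-a`. -/
def HasApex {n : ℕ} (a : Fin n → ℝ) (H : Set (Fin n → Rmax)) : Prop :=
  ∃ I J : Finset (Fin n), Disjoint I J ∧ I ∪ J = Finset.univ ∧ H = halfSpace I J a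

lemma hs_mono {n : ℕ} (a : Fin n → ℝ) {J J' : Finset (Fin n)} (h : J ⊆ J') :
    halfSpace Jᶜ J a ⊆ halfSpace J'ᶜ J' a := by
  intro x hx
  simp only [halfSpace, Set.mem_setOf_eq] at hx ⊢
  exact le_trans (Finset.sup_mono (Finset.compl_subset_compl.mpr h))
    (le_trans hx (Finset.sup_mono h))

lemma hs_not_subset {n : ℕ} (a : Fin n → ℝ) {J J' : Finset (Fin n)} (h : ¬ J ⊆ J') :
    ¬ halfSpace Jᶜ J a ⊆ halfSpace J'ᶜ J' a := by
  obtain ⟨j₀, hjJ, hjJ'⟩ := Finset.not_subset.mp h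
  intro hsub
  set x : Fin n → Rmax := fun k => if k = j₀ then ((-(a j₀) : ℝ) : Rmax) else ⊥ with hxdef
  have hmem : x ∈ halfSpace Jᶜ J a := by
    simp only [halfSpace, Set.mem_setOf_eq]
    have hb : (Jᶜ).sup (fun i => ((a i : Rmax)) + x i) = ⊥ := by
      rw [Finset.sup_eq_bot_iff]
      intro i hi
      have hne : i ≠ j₀ := fun e => (Finset.mem_compl.mp hi) (e ▸ hjJ)
      simp [hxdef, hne]
    simp [hb]
  have hx' := hsub hmem
  simp only [halfSpace, Set.mem_setOf_eq] at hx'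
  have h1 : ((0:ℝ) : Rmax) ≤ (J'ᶜ).sup (fun i => ((a i : Rmax)) + x i) := by
    have hmem' : j₀ ∈ J'ᶜ := Finset.mem_compl.mpr hjJ'
    have : (a j₀ : Rmax) + x j₀ = ((0:ℝ) : Rmax) := by
      simp [hxdef, ← WithBot.coe_add]
    calc ((0:ℝ):Rmax) = (a j₀ : Rmax) + x j₀ := this.symm
      _ ≤ _ := Finset.le_sup (f := fun i => ((a i : Rmax)) + x i) hmem'
  have h2 : J'.sup (fun j => ((a j : Rmax)) + x j) = ⊥ := by
    rw [Finset.sup_eq_bot_iff]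
    intro j hj
    have hne : j ≠ j₀ := fun e => hjJ' (e ▸ hj)
    simp [hxdef, hne]
  have : ((0:ℝ) : Rmax) ≤ ⊥ := h2 ▸ le_trans h1 hx'
  simp at this

lemma hs_subset_iff {n : ℕ} (a : Fin n → ℝ) {J J' : Finset (Fin n)} :
    halfSpace Jᶜ J a ⊆ halfSpace J'ᶜ J' a ↔ J ⊆ J' := by
  constructor
  · intro h
    by_contra hc
    exact hs_not_subset a hc h
  · exact hs_mono a

lemma hs_inj {n : ℕ} (a : Fin n → ℝ) {J J' : Finset (Fin n)}
    (h : halfSpace Jᶜ J a = halfSpace J'ᶜ J' a) : J = J' := by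
  exact Finset.Subset.antisymm ((hs_subset_iff a).mp h.le)
    ((hs_subset_iff a).mp h.ge)

lemma apex_form {n : ℕ} (a : Fin n → ℝ) (H : Set (Fin n → Rmax)) (h : HasApex a H) :
    ∃ J : Finset (Fin n), H = halfSpace Jᶜ J a := by
  obtain ⟨I, J, hdisj, huniv, hH⟩ := h
  refine ⟨J, ?_⟩
  have hI : I = Jᶜ := by
    ext i
    simp only [Finset.mem_compl]
    constructor
    · intro hiI hiJ
      exact (Finset.disjoint_left.mp hdisj) hiI hiJ
    · intro hiJ
      have : i ∈ I ∪ J := huniv ▸ Finset.mem_univ i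
      rcases Finset.mem_union.mp this with h' | h'
      · exact h'
      · exact absurd h' hiJ
  rw [hH, hI]

/-- Sperner bound for pairwise incomparable half-spaces with a
given apex, and attainment of the bound. -/
theorem stmt_15 {n : ℕ} (a : Fin n → ℝ) :
    (∀ F : Set (Set (Fin n → Rmax)), (∀ H ∈ F, HasApex a H) →
      F.Pairwise (fun H₁ H₂ => ¬ H₁ ⊆ H₂ ∧ ¬ H₂ ⊆ H₁) →
      F.Finite ∧ F.ncard ≤ n.choose (n / 2)) ∧
    (∃ F : Set (Set (Fin n → Rmax)), (∀ H ∈ F, HasApex a H) ∧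
      F.Pairwise (fun H₁ H₂ => ¬ H₁ ⊆ H₂ ∧ ¬ H₂ ⊆ H₁) ∧
      F.ncard = n.choose (n / 2)) := by
  classical
  constructor
  · intro F hF hpair
    set g : Set (Fin n → Rmax) → Finset (Fin n) := fun H =>
      if h : ∃ J : Finset (Fin n), H = halfSpace Jᶜ J a then h.choose else ∅ with hg
    have hgspec : ∀ H ∈ F, H = halfSpace (g H)ᶜ (g H) a := by
      intro H hH
      have h := apex_form a H (hF H hH)
      simp only [hg, dif_pos h]
      exact h.choose_spec
    have hinj : Set.InjOn g F := by
      intro H₁ h₁ H₂ h₂ he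
      rw [hgspec H₁ h₁, hgspec H₂ h₂, he]
    have hsub : F ⊆ (fun J : Finset (Fin n) => halfSpace Jᶜ J a) '' Set.univ := by
      intro H hH
      exact ⟨g H, Set.mem_univ _, (hgspec H hH).symm⟩
    have hfin : F.Finite := (Set.finite_univ.image _).subset hsub
    refine ⟨hfin, ?_⟩
    set 𝒜 : Finset (Finset (Fin n)) := hfin.toFinset.image g with h𝒜
    have hanti : IsAntichain (· ⊆ ·) (𝒜 : Set (Finset (Fin n))) := by
      intro J₁ hJ₁ J₂ hJ₂ hne
      simp only [h𝒜, Finset.coe_image, Set.mem_image, Set.Finite.coe_toFinset] at hJ₁ hJ₂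
      obtain ⟨H₁, hH₁, rfl⟩ := hJ₁
      obtain ⟨H₂, hH₂, rfl⟩ := hJ₂
      have hHne : H₁ ≠ H₂ := fun e => hne (by rw [e])
      have := (hpair hH₁ hH₂ hHne).1
      intro hsub'
      apply this
      rw [hgspec H₁ hH₁, hgspec H₂ hH₂]
      exact hs_mono a hsub'
    have hcard : 𝒜.card = F.ncard := by
      rw [h𝒜, Finset.card_image_of_injOn (by
        intro H₁ h₁ H₂ h₂ he
        exact hinj (hfin.mem_toFinset.mp h₁) (hfin.mem_toFinset.mp h₂) he)]
      exact (Set.ncard_eq_toFinset_card F hfin).symm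
    have hsp := IsAntichain.sperner hanti
    rw [Fintype.card_fin] at hsp
    rw [← hcard]
    exact hsp
  · refine ⟨(fun J : Finset (Fin n) => halfSpace Jᶜ J a) ''
      {J : Finset (Fin n) | J.card = n / 2}, ?_, ?_, ?_⟩
    · rintro H ⟨J, _, rfl⟩
      exact ⟨Jᶜ, J, disjoint_compl_left, compl_sup_eq_top, rfl⟩
    · rintro H₁ ⟨J₁, hJ₁, rfl⟩ H₂ ⟨J₂, hJ₂, rfl⟩ hne
      have hJne : J₁ ≠ J₂ := fun e => hne (by rw [e])
      constructor
      · exact hs_not_subset a (fun hsub =>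
          hJne (Finset.eq_of_subset_of_card_le hsub (hJ₂.trans hJ₁.symm).le))
      · exact hs_not_subset a (fun hsub =>
          hJne (Finset.eq_of_subset_of_card_le hsub (hJ₁.trans hJ₂.symm).le).symm)
    · rw [Set.ncard_image_of_injOn (fun J₁ _ J₂ _ h => hs_inj a h)]
      have : {J : Finset (Fin n) | J.card = n / 2} =
          ↑(Finset.powersetCard (n / 2) (Finset.univ : Finset (Fin n))) := by
        ext J
        simp [Finset.mem_powersetCard_univ]
      rw [this, Set.ncard_coe_finset, Finset.card_powersetCard, Finset.card_univ,
        Fintype.card_fin]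
end
end

section
/- Let n be odd, and for each subset I of {1,...,n} with |I| = ⌊n/2⌋ let v^I ∈ ℝ^n be the vector with v^I_i = 0 for i ∈ I and v^I_i = 1 for i ∉ I. Let V ⊆ ℝ_max^n be the max-plus cone generated by all such vectors v^I. Then for every subset I of {1,...,n} with |I| = ⌊n/2⌋, the half-space {x ∈ ℝ_max^n : max_{i∈I} x_i ≤ max_{j∉I} x_j} is minimal with respect to V. In particular, V admits C(n, ⌊n/2⌋) distinct minimal half-spaces with the same apex. -/
noncomputable section

/-- The cone of the example: generated by the vectors `v^I` (`I` of cardinality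
`⌊n/2⌋`) with `v^I_i = 0` for `i ∈ I` and `v^I_i = 1` otherwise. -/
def oddCone (n : ℕ) : Set (Fin n → Rmax) :=
  {x | ∃ lam : {I : Finset (Fin n) // I.card = n / 2} → Rmax,
    x = fun i => Finset.univ.sup (fun I =>
      lam I + (((if i ∈ (I : Finset (Fin n)) then (0 : ℝ) else 1) : ℝ) : Rmax))}

namespace Stmt16Aux

open Finset

variable {n : ℕ}

lemma mem_halfSpace_zero (I : Finset (Fin n)) (x : Fin n → Rmax) :
    x ∈ halfSpace I Iᶜ (fun _ => (0:ℝ)) ↔ I.sup x ≤ Iᶜ.sup x := by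
  simp only [halfSpace, Set.mem_setOf_eq, WithBot.coe_zero, zero_add]

lemma sup_indicator (S : Finset (Fin n)) (x : Fin n → Rmax) :
    Finset.univ.sup (fun k => (if k ∈ S then (0:Rmax) else ⊥) + x k)
      = S.sup (fun k => (((0:ℝ)) : Rmax) + x k) := by
  apply le_antisymm
  · refine Finset.sup_le fun k _ => ?_
    by_cases h : k ∈ S
    · refine le_trans ?_ (Finset.le_sup h)
      simp [if_pos h]
    · simp [if_neg h]
  · refine Finset.sup_le fun k hk => ?_
    refine le_trans ?_ (Finset.le_sup (Finset.mem_univ k))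
    simp [if_pos hk]

lemma vK_mem (K : Finset (Fin n)) (hK : K.card = n/2) :
    (fun i => (((if i ∈ K then (0:ℝ) else 1) : ℝ) : Rmax)) ∈ oddCone n := by
  refine ⟨fun J => if J = ⟨K, hK⟩ then (0:Rmax) else ⊥, ?_⟩
  funext i
  apply le_antisymm
  · have h := Finset.le_sup (f := fun J : {I : Finset (Fin n) // I.card = n/2} =>
      (if J = ⟨K, hK⟩ then (0:Rmax) else ⊥) +
        (((if i ∈ (J : Finset (Fin n)) then (0:ℝ) else 1) : ℝ) : Rmax))
      (Finset.mem_univ ⟨K, hK⟩)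
    simpa using h
  · refine Finset.sup_le fun J _ => ?_
    by_cases h : J = ⟨K, hK⟩
    · subst h; simp
    · simp [h]

lemma oddCone_subset (hn : Odd n) (I : Finset (Fin n)) (hI : I.card = n/2) :
    oddCone n ⊆ halfSpace I Iᶜ (fun _ => (0:ℝ)) := by
  rintro x ⟨lam, rfl⟩
  rw [mem_halfSpace_zero]
  refine Finset.sup_le fun i hi => ?_
  refine Finset.sup_le fun K _ => ?_
  obtain ⟨j, hjc, hjK⟩ : ∃ j ∈ Iᶜ, j ∉ (K : {I : Finset (Fin n) // I.card = n/2}).1 := by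
    by_contra hcon
    push_neg at hcon
    have hsub : Iᶜ ⊆ (K : {I : Finset (Fin n) // I.card = n/2}).1 := hcon
    have hc := Finset.card_le_card hsub
    have hKc := K.2
    have hIc : Iᶜ.card = n - n/2 := by
      rw [Finset.card_compl, hI, Fintype.card_fin]
    obtain ⟨m, hm⟩ := hn
    omega
  refine le_trans ?_ (Finset.le_sup hjc)
  refine le_trans ?_ (Finset.le_sup (Finset.mem_univ K))
  apply add_le_add_right
  rw [if_neg hjK]
  apply WithBot.coe_le_coe.mpr
  split <;> norm_num


lemma key_subset (hn : Odd n) (I : Finset (Fin n)) (hI : I.card = n/2)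
    (a b : Fin n → Rmax)
    (hV : oddCone n ⊆ {x | Finset.univ.sup (fun i => a i + x i) ≤
        Finset.univ.sup (fun j => b j + x j)})
    (hsub : {x | Finset.univ.sup (fun i => a i + x i) ≤
        Finset.univ.sup (fun j => b j + x j)} ⊆ halfSpace I Iᶜ (fun _ => (0:ℝ))) :
    halfSpace I Iᶜ (fun _ => (0:ℝ)) ⊆ {x | Finset.univ.sup (fun i => a i + x i) ≤
        Finset.univ.sup (fun j => b j + x j)} := by
  have hodd : n = 2*(n/2)+1 := by obtain ⟨m, hm⟩ := hn; omega
  have hIcc : Iᶜ.card = n/2 + 1 := by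
    rw [Finset.card_compl, hI, Fintype.card_fin]; omega
  -- (A) : a is strictly bigger than b on I
  have hA : ∀ i ∈ I, b i < a i := by
    intro i hi
    by_contra hle
    push_neg at hle
    have hmem : unitVec i ∈ {x | Finset.univ.sup (fun i => a i + x i) ≤
        Finset.univ.sup (fun j => b j + x j)} := by
      simp only [Set.mem_setOf_eq]
      refine Finset.sup_le fun k _ => ?_
      by_cases hk : k = i
      · subst hk
        calc a k + unitVec k k = a k := by simp [unitVec]
          _ ≤ b k := hle
          _ = b k + unitVec k k := by simp [unitVec]
          _ ≤ _ := Finset.le_sup (f := fun m => b m + unitVec k m) (Finset.mem_univ k)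
      · simp [unitVec, hk]
    have hH := hsub hmem
    rw [mem_halfSpace_zero] at hH
    have h1 : (0:Rmax) ≤ I.sup (unitVec i) := by
      refine le_trans ?_ (Finset.le_sup hi); simp [unitVec]
    have h2 : Iᶜ.sup (unitVec i) ≤ ⊥ := by
      refine Finset.sup_le fun k hk => ?_
      have hne : k ≠ i := by rintro rfl; exact (Finset.mem_compl.mp hk) hi
      simp [unitVec, hne]
    have : (0:Rmax) ≤ ⊥ := le_trans h1 (le_trans hH h2)
    simp at this
  have hAne : ∀ i ∈ I, a i ≠ ⊥ := by
    intro i hi h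
    have := hA i hi
    rw [h] at this
    exact not_lt_bot this
  -- (core) : extraction of a big b-coordinate from the generator constraints
  have hcore : ∀ j ∈ Iᶜ, ∀ γ : ℝ, (∃ i0 ∈ insert j I, (γ:Rmax) ≤ a i0) →
      (∀ k ∈ insert j I, b k < (γ:Rmax)) →
      ∃ j' ∈ Iᶜ.erase j, ((1+γ:ℝ):Rmax) ≤ b j' := by
    rintro j hj γ ⟨i0, hi0T, hi0γ⟩ hblt
    set K : Finset (Fin n) := Iᶜ.erase j with hKdef
    have hKcard : K.card = n/2 := by
      rw [hKdef, Finset.card_erase_of_mem hj, hIcc]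
      omega
    have hcon := hV (vK_mem K hKcard)
    simp only [Set.mem_setOf_eq] at hcon
    have hTK : ∀ k, k ∈ insert j I → k ∉ K := by
      intro k hk
      rcases Finset.mem_insert.mp hk with h | h
      · subst h; exact Finset.notMem_erase k Iᶜ
      · intro hkK
        exact (Finset.mem_compl.mp (Finset.mem_of_mem_erase hkK)) h
    have hKT : ∀ k, k ∉ K → k ∈ insert j I := by
      intro k hk
      by_cases hkj : k = j
      · exact Finset.mem_insert.mpr (Or.inl hkj)
      · refine Finset.mem_insert.mpr (Or.inr ?_)
        by_contra hkI
        exact hk (Finset.mem_erase.mpr ⟨hkj, Finset.mem_compl.mpr hkI⟩)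
    have hlhs : ((1+γ:ℝ):Rmax) ≤ Finset.univ.sup
        (fun k => a k + (((if k ∈ K then (0:ℝ) else 1) : ℝ) : Rmax)) := by
      refine le_trans ?_ (Finset.le_sup (Finset.mem_univ i0))
      rw [if_neg (hTK i0 hi0T)]
      calc ((1+γ:ℝ):Rmax) = (γ:Rmax) + ((1:ℝ):Rmax) := by
            push_cast
            exact add_comm _ _
        _ ≤ a i0 + ((1:ℝ):Rmax) := add_le_add_left hi0γ _
    have hrhs := le_trans hlhs hcon
    rw [Finset.le_sup_iff (bot_lt_iff_ne_bot.mpr (WithBot.coe_ne_bot))] at hrhs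
    obtain ⟨k, _, hk⟩ := hrhs
    by_cases hkK : k ∈ K
    · refine ⟨k, hkK, ?_⟩
      rw [if_pos hkK] at hk
      simpa using hk
    · exfalso
      have hkT := hKT k hkK
      have hbk := hblt k hkT
      rw [if_neg hkK] at hk
      rcases eq_or_ne (b k) ⊥ with h | h
      · rw [h] at hk; simp at hk
      · obtain ⟨β, hβ⟩ := WithBot.ne_bot_iff_exists.mp h
        rw [← hβ] at hk hbk
        rw [← WithBot.coe_add] at hk
        have h1 := WithBot.coe_le_coe.mp hk
        have h2 := WithBot.coe_lt_coe.mp hbk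
        linarith
  -- (B) : a big b-coordinate with a ≤ b yields a contradiction
  have hB : ∀ j ∈ Iᶜ, I.Nonempty → ∀ γ : ℝ, (∀ i ∈ I, a i ≤ (γ:Rmax)) →
      ((1+γ:ℝ):Rmax) ≤ b j → a j ≤ b j → False := by
    rintro j hj ⟨i1, hi1⟩ γ haγ hbj habj
    obtain ⟨β, hβ⟩ : ∃ β:ℝ, (β:Rmax) = b j :=
      WithBot.ne_bot_iff_exists.mp (by rintro h; rw [h] at hbj; simp at hbj)
    set x : Fin n → Rmax :=
      fun k => if k ∈ I then (0:Rmax) else if k = j then ((γ - β:ℝ):Rmax) else ⊥ with hx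
    have hjI : j ∉ I := Finset.mem_compl.mp hj
    have hxj : x j = ((γ - β:ℝ):Rmax) := by rw [hx]; simp [hjI]
    have hxH' : x ∈ {x | Finset.univ.sup (fun i => a i + x i) ≤
        Finset.univ.sup (fun j => b j + x j)} := by
      simp only [Set.mem_setOf_eq]
      refine Finset.sup_le fun k _ => ?_
      by_cases hkI : k ∈ I
      · have hxk : x k = 0 := by rw [hx]; simp [hkI]
        rw [hxk, add_zero]
        have hbj2 : b j + x j = (γ:Rmax) := by
          rw [hxj, ← hβ, ← WithBot.coe_add]
          congr 1; ring
        refine le_trans (le_trans (haγ k hkI) (le_of_eq hbj2.symm))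
          (Finset.le_sup (f := fun m => b m + x m) (Finset.mem_univ j))
      · by_cases hkj : k = j
        · subst hkj
          exact le_trans (add_le_add_left habj _)
            (Finset.le_sup (f := fun m => b m + x m) (Finset.mem_univ k))
        · have hxk : x k = ⊥ := by rw [hx]; simp [hkI, hkj]
          rw [hxk, WithBot.add_bot]; exact bot_le
    have hxH := hsub hxH'
    rw [mem_halfSpace_zero] at hxH
    have h1 : (0:Rmax) ≤ I.sup x := by
      refine le_trans ?_ (Finset.le_sup hi1)
      rw [hx]; simp [hi1]
    have h2 : Iᶜ.sup x ≤ ((γ - β:ℝ):Rmax) := by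
      refine Finset.sup_le fun k hk => ?_
      have hkI : k ∉ I := Finset.mem_compl.mp hk
      by_cases hkj : k = j
      · subst hkj; rw [hxj]
      · rw [hx]; simp [hkI, hkj]
    have hfinal : (0:Rmax) ≤ ((γ - β:ℝ):Rmax) := le_trans h1 (le_trans hxH h2)
    have hβγ : (1:ℝ) + γ ≤ β := by
      rw [← hβ] at hbj; exact_mod_cast hbj
    have h0 : (0:ℝ) ≤ γ - β := by exact_mod_cast hfinal
    linarith
  -- (C) : a ≤ b on the complement of I
  have hC : ∀ j ∈ Iᶜ, a j ≤ b j := by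
    by_contra hnc
    push_neg at hnc
    obtain ⟨j0, hj0, hj0ab⟩ := hnc
    have hBadne : (Iᶜ.filter (fun j => b j < a j)).Nonempty :=
      ⟨j0, Finset.mem_filter.mpr ⟨hj0, hj0ab⟩⟩
    obtain ⟨js, hjs, hjsmax⟩ := Finset.exists_max_image (Iᶜ.filter (fun j => b j < a j)) b hBadne
    have hjsc : js ∈ Iᶜ := (Finset.mem_filter.mp hjs).1
    have hjsab : b js < a js := (Finset.mem_filter.mp hjs).2
    have hTlt : ∀ k ∈ insert js I, b k < a k := by
      intro k hk; rcases Finset.mem_insert.mp hk with h|h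
      · subst h; exact hjsab
      · exact hA k h
    obtain ⟨i0, hi0, hsup⟩ := Finset.exists_mem_eq_sup (insert js I)
      (Finset.insert_nonempty _ _) a
    have hi0ne : a i0 ≠ ⊥ := by
      intro h
      have := hTlt i0 hi0; rw [h] at this; exact not_lt_bot this
    obtain ⟨γ, hγ⟩ := WithBot.ne_bot_iff_exists.mp hi0ne
    have hsupγ : (insert js I).sup a = (γ:Rmax) := by rw [hsup, ← hγ]
    obtain ⟨j', hj'e, hj'b⟩ := hcore js hjsc γ ⟨i0, hi0, le_of_eq hγ⟩
      (fun k hk => lt_of_lt_of_le (hTlt k hk) (hsupγ ▸ Finset.le_sup hk))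
    have hj'c : j' ∈ Iᶜ := Finset.mem_of_mem_erase hj'e
    have hγlt : (γ:Rmax) < ((1+γ:ℝ):Rmax) := by
      exact_mod_cast (by linarith : γ < 1 + γ)
    have hj'ab : a j' ≤ b j' := by
      by_contra hcon2
      push_neg at hcon2
      have hj'Bad : j' ∈ Iᶜ.filter (fun j => b j < a j) :=
        Finset.mem_filter.mpr ⟨hj'c, hcon2⟩
      have hle := hjsmax j' hj'Bad
      have h1 : b js < ((1+γ:ℝ):Rmax) :=
        lt_of_lt_of_le (lt_of_lt_of_le hjsab (hsupγ ▸ Finset.le_sup (Finset.mem_insert_self _ _)))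
          (le_of_lt hγlt)
      exact absurd (le_trans hj'b hle) (not_le.mpr h1)
    have hne2 : js ≠ j' := fun h => (Finset.mem_erase.mp hj'e).1 h.symm
    have hIcard2 : 1 < Iᶜ.card := Finset.one_lt_card.mpr ⟨js, hjsc, j', hj'c, hne2⟩
    have hIne : I.Nonempty := by
      rw [← Finset.card_pos, hI]
      rw [hIcc] at hIcard2
      omega
    exact hB j' hj'c hIne γ
      (fun i hi => hsupγ ▸ Finset.le_sup (Finset.mem_insert_of_mem hi)) hj'b hj'ab
  -- (D) : a on I is dominated by b on the complement
  have hD : ∀ i ∈ I, ∀ j ∈ Iᶜ, a i ≤ b j := by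
    intro i hi j hj
    by_contra hcon
    push_neg at hcon
    obtain ⟨i0, hi0, hsup⟩ := Finset.exists_mem_eq_sup (insert j I)
      (Finset.insert_nonempty _ _) a
    have hi0ne : a i0 ≠ ⊥ := by
      intro h
      have h1 : a i ≤ a i0 := hsup ▸ Finset.le_sup (Finset.mem_insert_of_mem hi)
      rw [h] at h1
      exact hAne i hi (le_bot_iff.mp h1)
    obtain ⟨γ, hγ⟩ := WithBot.ne_bot_iff_exists.mp hi0ne
    have hsupγ : (insert j I).sup a = (γ:Rmax) := by rw [hsup, ← hγ]
    have hblt : ∀ k ∈ insert j I, b k < (γ:Rmax) := by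
      intro k hk
      rcases Finset.mem_insert.mp hk with h|h
      · subst h
        exact lt_of_lt_of_le hcon (hsupγ ▸ Finset.le_sup (Finset.mem_insert_of_mem hi))
      · exact lt_of_lt_of_le (hA k h) (hsupγ ▸ Finset.le_sup hk)
    obtain ⟨j', hj'e, hj'b⟩ := hcore j hj γ ⟨i0, hi0, le_of_eq hγ⟩ hblt
    have hj'c : j' ∈ Iᶜ := Finset.mem_of_mem_erase hj'e
    exact hB j' hj'c ⟨i, hi⟩ γ
      (fun i' hi' => hsupγ ▸ Finset.le_sup (Finset.mem_insert_of_mem hi')) hj'b (hC j' hj'c)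
  -- (E) : conclude
  intro x hx
  rw [mem_halfSpace_zero] at hx
  simp only [Set.mem_setOf_eq]
  refine Finset.sup_le fun k _ => ?_
  by_cases hkI : k ∈ I
  · rcases eq_or_ne (x k) ⊥ with h|h
    · rw [h, WithBot.add_bot]; exact bot_le
    · have hxk : ⊥ < x k := bot_lt_iff_ne_bot.mpr h
      have h1 : x k ≤ Iᶜ.sup x := le_trans (Finset.le_sup hkI) hx
      rw [Finset.le_sup_iff hxk] at h1
      obtain ⟨j, hj, hxj⟩ := h1
      calc a k + x k ≤ b j + x j := add_le_add (hD k hkI j hj) hxj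
        _ ≤ _ := Finset.le_sup (f := fun m => b m + x m) (Finset.mem_univ j)
  · have hkc : k ∈ Iᶜ := Finset.mem_compl.mpr hkI
    calc a k + x k ≤ b k + x k := add_le_add_left (hC k hkc) _
      _ ≤ _ := Finset.le_sup (f := fun m => b m + x m) (Finset.mem_univ k)

end Stmt16Aux

/-- each half-space `{x : max_{i∈I} x_i ≤ max_{j∉I} x_j}` with
`|I| = ⌊n/2⌋` is minimal with respect to `oddCone n`; there are `C(n, ⌊n/2⌋)`
distinct such minimal half-spaces, all with the same apex. -/
theorem stmt_16 (n : ℕ) (hn : Odd n) :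
    (∀ I : Finset (Fin n), I.card = n / 2 →
      IsMinimalHalfSpace (oddCone n) (halfSpace I Iᶜ (fun _ => (0 : ℝ)))) ∧
    {H : Set (Fin n → Rmax) | ∃ I : Finset (Fin n), I.card = n / 2 ∧
        H = halfSpace I Iᶜ (fun _ => (0 : ℝ))}.ncard = n.choose (n / 2) := by
  constructor
  · intro I hI
    refine ⟨⟨fun k => if k ∈ I then (0:Rmax) else ⊥,
        fun k => if k ∈ Iᶜ then (0:Rmax) else ⊥, ?_⟩,
      Stmt16Aux.oddCone_subset hn I hI, ?_⟩
    · ext x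
      simp only [Set.mem_setOf_eq, Stmt16Aux.sup_indicator]
      rfl
    · rintro ⟨H', ⟨a, b, rfl⟩, hVsub, hss⟩
      exact hss.not_subset (Stmt16Aux.key_subset hn I hI a b hVsub hss.subset)
  · have hset : {H : Set (Fin n → Rmax) | ∃ I : Finset (Fin n), I.card = n / 2 ∧
        H = halfSpace I Iᶜ (fun _ => (0 : ℝ))}
        = (fun I : Finset (Fin n) => halfSpace I Iᶜ (fun _ => (0:ℝ))) ''
            {I : Finset (Fin n) | I.card = n / 2} := by
      ext H
      constructor
      · rintro ⟨I, hI, rfl⟩; exact ⟨I, hI, rfl⟩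
      · rintro ⟨I, hI, rfl⟩; exact ⟨I, hI, rfl⟩
    have hkey : ∀ (A B : Finset (Fin n)),
        halfSpace A Aᶜ (fun _ => (0:ℝ)) = halfSpace B Bᶜ (fun _ => (0:ℝ)) → A ⊆ B := by
      intro A B h k hkA
      by_contra hkB
      have h1 : unitVec k ∈ halfSpace B Bᶜ (fun _ => (0:ℝ)) := by
        rw [Stmt16Aux.mem_halfSpace_zero]
        refine le_trans (Finset.sup_le fun m hm => ?_) bot_le
        have hne : m ≠ k := fun e => hkB (e ▸ hm)
        simp [unitVec, hne]
      rw [← h, Stmt16Aux.mem_halfSpace_zero] at h1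
      have h2 : (0:Rmax) ≤ A.sup (unitVec k) :=
        le_trans (by simp [unitVec]) (Finset.le_sup hkA)
      have h3 : Aᶜ.sup (unitVec k) ≤ ⊥ := by
        refine Finset.sup_le fun m hm => ?_
        have hne : m ≠ k := fun e => (Finset.mem_compl.mp hm) (e ▸ hkA)
        simp [unitVec, hne]
      have hcon : (0:Rmax) ≤ ⊥ := le_trans h2 (le_trans h1 h3)
      simp at hcon
    have hinj : Set.InjOn (fun I : Finset (Fin n) => halfSpace I Iᶜ (fun _ => (0:ℝ)))
        {I : Finset (Fin n) | I.card = n / 2} := by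
      intro I hI J hJ heq
      refine Finset.eq_of_subset_of_card_le (hkey I J heq) ?_
      rw [hI, hJ]
    rw [hset, Set.ncard_image_of_injOn hinj]
    have hpc : {I : Finset (Fin n) | I.card = n / 2}
        = ↑(Finset.powersetCard (n/2) (Finset.univ : Finset (Fin n))) := by
      ext I
      simp [Finset.mem_powersetCard, Finset.subset_univ]
    rw [hpc, Set.ncard_coe_finset, Finset.card_powersetCard, Finset.card_univ,
      Fintype.card_fin]
end
end

section
/- Let V ⊆ ℝ_max^n be the max-plus cone generated by vectors v^1,...,v^p ∈ ℝ^n (all entries finite), let i ∈ {1,...,n}, J ⊆ {1,...,n}\{i}, and b_j ∈ ℝ for j ∈ J, and suppose (e^i, ⊕_{j∈J} b_j ⊙ e^j) belongs to the polar V°. Then (e^i, ⊕_{j∈J} b_j ⊙ e^j) is an extreme vector of V° if, and only if, the half-space {x ∈ ℝ_max^{J∪{i}} : x_i ≤ max_{j∈J}(b_j + x_j)} is minimal with respect to the projection of V onto the coordinates indexed by J ∪ {i}. -/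
noncomputable section

namespace S19

open Finset

lemma rbot_add (a : Rmax) : ⊥ + a = ⊥ := WithBot.bot_add a
lemma radd_bot (a : Rmax) : a + ⊥ = ⊥ := WithBot.add_bot a

lemma sup_eq_max {α : Type*} [LinearOrder α] {a b : α} : a ⊔ b = max a b := rfl

lemma sup_add_left {ι : Type} (s : Finset ι) (f : ι → Rmax) (a : Rmax) :
    s.sup (fun x => a + f x) = a + s.sup f := by
  induction s using Finset.cons_induction with
  | empty => simp [radd_bot]
  | cons x s hx ih => rw [Finset.sup_cons, Finset.sup_cons, ih, sup_eq_max, sup_eq_max,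
      max_add_add_left]

lemma sup_support {ι : Type} [Fintype ι] (s : Finset ι) (f : ι → Rmax)
    (h : ∀ k ∉ s, f k = ⊥) : univ.sup f = s.sup f := by
  refine le_antisymm (Finset.sup_le fun k _ => ?_) (Finset.sup_le fun k hk => Finset.le_sup (mem_univ k))
  by_cases hk : k ∈ s
  · exact Finset.le_sup hk
  · simp [h k hk]

lemma sup_single {ι : Type} [Fintype ι] [DecidableEq ι] (r : ι) (g : ι → Rmax) :
    univ.sup (fun r' => (if r' = r then (0:Rmax) else ⊥) + g r') = g r := by
  refine le_antisymm (Finset.sup_le fun r' _ => ?_) ?_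
  · by_cases h : r' = r <;> simp [h, rbot_add]
  · calc g r = (if r = r then (0:Rmax) else ⊥) + g r := by simp
    _ ≤ _ := Finset.le_sup (f := fun r' => (if r' = r then (0:Rmax) else ⊥) + g r') (mem_univ r)

lemma add_lt_add_coe {u w : Rmax} (t : ℝ) (h : u < w) : u + (t:Rmax) < w + (t:Rmax) := by
  induction w using WithBot.recBotCoe with
  | bot => exact absurd h (by simp)
  | coe γ =>
    induction u using WithBot.recBotCoe with
    | bot => rw [rbot_add, ← WithBot.coe_add]; exact WithBot.bot_lt_coe _
    | coe δ =>
      rw [← WithBot.coe_add, ← WithBot.coe_add, WithBot.coe_lt_coe]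
      have : δ < γ := WithBot.coe_lt_coe.mp h
      linarith

lemma le_shift {x y : ℝ} {c : Rmax} (h : (x:Rmax) ≤ c + (y:Rmax)) : ((x - y : ℝ):Rmax) ≤ c := by
  induction c using WithBot.recBotCoe with
  | bot => rw [rbot_add] at h; exact absurd h (by simp)
  | coe γ =>
    rw [← WithBot.coe_add, WithBot.coe_le_coe] at h
    exact WithBot.coe_le_coe.mpr (by linarith)

lemma ne_bot_of_coe_le {x : ℝ} {c y : Rmax} (h : (x:Rmax) ≤ c + y) : ∃ γ : ℝ, c = (γ:Rmax) := by
  induction c using WithBot.recBotCoe with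
  | bot => rw [rbot_add] at h; exact absurd h (by simp)
  | coe γ => exact ⟨γ, rfl⟩


section Main
open Finset
variable {n p : ℕ} (v : Fin p → Fin n → ℝ) (i : Fin n) (J : Finset (Fin n)) (b : Fin n → ℝ)

/-- Witness condition. -/
def Wc : Prop := ∀ j ∈ J, ∃ r : Fin p,
  v r i - v r j = b j ∧ ∀ k ∈ J, k ≠ j → b k < v r i - v r k

lemma mem_genCone_gen (r : Fin p) : (fun k => ((v r k : ℝ) : Rmax)) ∈ genCone v := by
  refine ⟨fun r' => if r' = r then (0:Rmax) else ⊥, ?_⟩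
  funext k
  rw [sup_single r (fun r' => ((v r' k : ℝ) : Rmax))]

lemma mem_polar_iff (q : (Fin n → Rmax) × (Fin n → Rmax)) :
    q ∈ polar (genCone v) ↔ ∀ r, Finset.univ.sup (fun k => q.1 k + ((v r k : ℝ):Rmax)) ≤
      Finset.univ.sup (fun k => q.2 k + ((v r k : ℝ):Rmax)) := by
  constructor
  · intro h r
    exact h _ (mem_genCone_gen v r)
  · rintro h x ⟨lam, rfl⟩
    have key : ∀ g : Fin n → Rmax,
        Finset.univ.sup (fun k => g k + Finset.univ.sup (fun r => lam r + ((v r k:ℝ):Rmax))) =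
        Finset.univ.sup (fun r => lam r + Finset.univ.sup (fun k => g k + ((v r k:ℝ):Rmax))) := by
      intro g
      calc Finset.univ.sup (fun k => g k + Finset.univ.sup (fun r => lam r + ((v r k:ℝ):Rmax)))
          = Finset.univ.sup (fun k => Finset.univ.sup (fun r => g k + (lam r + ((v r k:ℝ):Rmax)))) := by
            refine Finset.sup_congr rfl fun k _ => ?_
            rw [sup_add_left]
        _ = Finset.univ.sup (fun r => Finset.univ.sup (fun k => g k + (lam r + ((v r k:ℝ):Rmax)))) :=
            Finset.sup_comm _ _ _
        _ = Finset.univ.sup (fun r => lam r + Finset.univ.sup (fun k => g k + ((v r k:ℝ):Rmax))) := by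
            refine Finset.sup_congr rfl fun r _ => ?_
            rw [← sup_add_left]
            exact Finset.sup_congr rfl fun k _ => by rw [add_left_comm]
    rw [key, key]
    exact Finset.sup_le fun r _ => le_trans (add_le_add_right (h r) _)
      (Finset.le_sup (f := fun r => lam r + Finset.univ.sup (fun k => q.2 k + ((v r k:ℝ):Rmax))) (mem_univ r))

lemma unit_sup (x : Fin n → Rmax) :
    Finset.univ.sup (fun k => unitVec i k + x k) = x i := sup_single i x

lemma pair_mem_iff (c : Fin n → Rmax) (hsupp : ∀ k ∉ J, c k = ⊥) :
    (unitVec i, c) ∈ polar (genCone v) ↔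
      ∀ r, ((v r i : ℝ):Rmax) ≤ J.sup (fun j => c j + ((v r j : ℝ):Rmax)) := by
  rw [mem_polar_iff]
  have e : ∀ r, Finset.univ.sup (fun k => c k + ((v r k:ℝ):Rmax)) =
      J.sup (fun j => c j + ((v r j:ℝ):Rmax)) := fun r =>
    sup_support J _ (fun k hk => by rw [hsupp k hk, rbot_add])
  constructor
  · intro h r
    have := h r
    rwa [unit_sup, e r] at this
  · intro h r
    rw [unit_sup, e r]
    exact h r

lemma cov_elim {c : Fin n → Rmax} {r : Fin p}
    (h : ((v r i : ℝ):Rmax) ≤ J.sup (fun j => c j + ((v r j : ℝ):Rmax))) :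
    ∃ j ∈ J, ((v r i : ℝ):Rmax) ≤ c j + ((v r j : ℝ):Rmax) :=
  (Finset.le_sup_iff (WithBot.bot_lt_coe _)).mp h

/-- Rigidity: under the witness condition, the only `c ≤ jVec J b` defining a valid
inequality is `jVec J b` itself. -/
lemma rigid (hW : Wc v i J b) (c : Fin n → Rmax) (hle : c ≤ jVec J b)
    (hc : ∀ r, ((v r i : ℝ):Rmax) ≤ J.sup (fun j => c j + ((v r j : ℝ):Rmax))) :
    c = jVec J b := by
  funext k
  by_cases hk : k ∈ J
  · obtain ⟨r, hr1, hr2⟩ := hW k hk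
    obtain ⟨j', hj', hle'⟩ := cov_elim v i J (hc r)
    have hcb : c j' ≤ ((b j' : ℝ):Rmax) := by
      have := hle j'
      simpa [jVec, hj'] using this
    have hreal : v r i ≤ b j' + v r j' := by
      have h2 : ((v r i : ℝ):Rmax) ≤ ((b j' : ℝ):Rmax) + ((v r j' : ℝ):Rmax) :=
        le_trans hle' (add_le_add_left hcb _)
      exact_mod_cast h2
    have hjk : j' = k := by
      by_contra hne
      exact absurd hreal (not_le.mpr (by linarith [hr2 j' hj' hne]))
    subst hjk
    have h1 : ((b j' : ℝ):Rmax) ≤ c j' := by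
      have := le_shift (x := v r i) (y := v r j') (c := c j') (by exact_mod_cast hle')
      rwa [hr1] at this
    have : c j' = ((b j' : ℝ):Rmax) := le_antisymm hcb h1
    rw [this]; simp [jVec, hk]
  · have := hle k
    have h0 : c k ≤ ⊥ := by simpa [jVec, hk] using this
    rw [le_bot_iff.mp h0]; simp [jVec, hk]

lemma extreme_iff_rigid (hmem : (unitVec i, jVec J b) ∈ polar (genCone v)) :
    IsExtremePair (polar (genCone v)) (unitVec i, jVec J b) ↔
      ∀ c : Fin n → Rmax, c ≤ jVec J b → (unitVec i, c) ∈ polar (genCone v) →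
        c = jVec J b := by
  constructor
  · intro hext c hle hcm
    by_contra hne
    have hw : ((fun _ => (⊥:Rmax)), jVec J b) ∈ polar (genCone v) := by
      intro x hx
      refine le_trans (Finset.sup_le fun k _ => ?_) bot_le
      rw [rbot_add]
    have hdec : (unitVec i, jVec J b) =
        (fun k => max (unitVec i k) ((fun _ => (⊥:Rmax)) k),
         fun k => max (c k) (jVec J b k)) := by
      refine Prod.ext ?_ ?_
      · funext k; exact (max_eq_left bot_le).symm
      · funext k; exact (max_eq_right (hle k)).symm
    rcases hext.2.2 (unitVec i, c) hcm ((fun _ => (⊥:Rmax)), jVec J b) hw hdec with h | h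
    · exact hne (congrArg Prod.snd h).symm
    · have := congrFun (congrArg Prod.fst h) i
      simp [unitVec] at this
  · intro hrig
    refine ⟨hmem, ?_, ?_⟩
    · intro h
      have := congrFun (congrArg Prod.fst h) i
      simp [unitVec] at this
    · intro u hu w hw heq
      have key : ∀ u' w' : (Fin n → Rmax) × (Fin n → Rmax), u' ∈ polar (genCone v) →
          (∀ k, max (u'.1 k) (w'.1 k) = unitVec i k) →
          (∀ k, max (u'.2 k) (w'.2 k) = jVec J b k) →
          u'.1 i = (0:Rmax) → (unitVec i, jVec J b) = u' := by
        intro u' w' hu' h1 h2 hui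
        have e1 : u'.1 = unitVec i := by
          funext k
          by_cases hk : k = i
          · subst hk; rw [hui]; simp [unitVec]
          · have : u'.1 k ≤ unitVec i k := (h1 k) ▸ le_max_left _ _
            have hbot : u'.1 k ≤ ⊥ := by simpa [unitVec, hk] using this
            rw [le_bot_iff.mp hbot]; simp [unitVec, hk]
        have e2le : u'.2 ≤ jVec J b := fun k => (h2 k) ▸ le_max_left _ _
        have hpm : (unitVec i, u'.2) ∈ polar (genCone v) := by
          have : u' = (unitVec i, u'.2) := Prod.ext e1 rfl
          rwa [this] at hu'
        have := hrig u'.2 e2le hpm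
        calc (unitVec i, jVec J b) = (u'.1, u'.2) := Prod.ext e1.symm this.symm
          _ = u' := rfl
      have h1 : ∀ k, max (u.1 k) (w.1 k) = unitVec i k := fun k =>
        (congrFun (congrArg Prod.fst heq) k).symm
      have h2 : ∀ k, max (u.2 k) (w.2 k) = jVec J b k := fun k =>
        (congrFun (congrArg Prod.snd heq) k).symm
      have hmax : max (u.1 i) (w.1 i) = (0:Rmax) := by
        have := h1 i; simpa [unitVec] using this
      rcases max_choice (u.1 i) (w.1 i) with h | h
      · exact Or.inl (key u w hu h1 h2 (h ▸ hmax))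
      · refine Or.inr (key w u hw (fun k => (max_comm _ _).trans (h1 k))
          (fun k => (max_comm _ _).trans (h2 k)) (h ▸ hmax))

/-- If the witness condition fails, there is a strictly smaller valid coefficient vector. -/
lemma not_wc (hmem : (unitVec i, jVec J b) ∈ polar (genCone v)) (hnw : ¬ Wc v i J b) :
    ∃ (c : Fin n → Rmax) (j0 : Fin n), j0 ∈ J ∧ c ≤ jVec J b ∧ c j0 < ((b j0 : ℝ):Rmax) ∧
      (∀ k, k ≠ j0 → c k = jVec J b k) ∧
      (∀ r, ((v r i : ℝ):Rmax) ≤ J.sup (fun j => c j + ((v r j : ℝ):Rmax))) := by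
  classical
  have hcov : ∀ r, ((v r i : ℝ):Rmax) ≤ J.sup (fun j => jVec J b j + ((v r j : ℝ):Rmax)) :=
    (pair_mem_iff v i J (jVec J b) (fun k hk => by simp [jVec, hk])).mp hmem
  have hcovb : ∀ r, ∃ j ∈ J, v r i - v r j ≤ b j := by
    intro r
    obtain ⟨j, hj, hle⟩ := cov_elim v i J (hcov r)
    refine ⟨j, hj, ?_⟩
    have : ((v r i : ℝ):Rmax) ≤ ((b j : ℝ):Rmax) + ((v r j : ℝ):Rmax) := by
      rwa [show jVec J b j = ((b j : ℝ):Rmax) by simp [jVec, hj]] at hle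
    have := le_shift (c := ((b j : ℝ):Rmax)) (by exact_mod_cast this)
    exact_mod_cast this
  rw [Wc] at hnw
  push_neg at hnw
  obtain ⟨j0, hj0, hfail⟩ := hnw
  set S : Finset (Fin p) :=
    Finset.univ.filter (fun r => ∀ k ∈ J, k ≠ j0 → b k < v r i - v r k) with hS
  have hSlt : ∀ r ∈ S, v r i - v r j0 < b j0 := by
    intro r hr
    have hrS : ∀ k ∈ J, k ≠ j0 → b k < v r i - v r k := by
      have := Finset.mem_filter.mp hr
      exact this.2
    obtain ⟨j, hj, hle⟩ := hcovb r
    have hjj0 : j = j0 := by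
      by_contra hne
      exact absurd hle (not_le.mpr (hrS j hj hne))
    subst hjj0
    rcases lt_or_eq_of_le hle with h | h
    · exact h
    · obtain ⟨k, hk, hk0, hk2⟩ := hfail r h
      exact absurd (hrS k hk hk0) (not_lt.mpr hk2)
  refine ⟨fun k => if k = j0 then S.sup (fun r => ((v r i - v r j0 : ℝ):Rmax)) else jVec J b k,
    j0, hj0, ?_, ?_, ?_, ?_⟩
  · intro k
    by_cases hk : k = j0
    · subst hk
      simp only [if_pos rfl, jVec, hj0, if_pos]
      exact Finset.sup_le fun r hr => WithBot.coe_le_coe.mpr (hSlt r hr).le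
    · simp [hk]
  · beta_reduce
    rw [if_pos rfl]
    exact (Finset.sup_lt_iff (WithBot.bot_lt_coe _)).mpr
      (fun r hr => WithBot.coe_lt_coe.mpr (hSlt r hr))
  · intro k hk; beta_reduce; rw [if_neg hk]
  · intro r
    by_cases hr : r ∈ S
    · have h1 : ((v r i - v r j0 : ℝ):Rmax) ≤ S.sup (fun r => ((v r i - v r j0 : ℝ):Rmax)) :=
        Finset.le_sup (f := fun r => ((v r i - v r j0 : ℝ):Rmax)) hr
      have h2 : ((v r i : ℝ):Rmax) ≤
          (if j0 = j0 then S.sup (fun r => ((v r i - v r j0 : ℝ):Rmax)) else jVec J b j0)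
            + ((v r j0 : ℝ):Rmax) := by
        rw [if_pos rfl]
        calc ((v r i : ℝ):Rmax) = ((v r i - v r j0 : ℝ):Rmax) + ((v r j0 : ℝ):Rmax) := by
              rw [← WithBot.coe_add]; norm_num
          _ ≤ _ := add_le_add_left h1 _
      exact le_trans h2 (Finset.le_sup (f := fun j =>
        (if j = j0 then S.sup (fun r => ((v r i - v r j0 : ℝ):Rmax)) else jVec J b j)
          + ((v r j : ℝ):Rmax)) hj0)
    · have : ¬ ∀ k ∈ J, k ≠ j0 → b k < v r i - v r k := by
        intro hall
        exact hr (Finset.mem_filter.mpr ⟨Finset.mem_univ r, hall⟩)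
      push_neg at this
      obtain ⟨k, hk, hk0, hk2⟩ := this
      have h2 : ((v r i : ℝ):Rmax) ≤
          (if k = j0 then S.sup (fun r => ((v r i - v r j0 : ℝ):Rmax)) else jVec J b k)
            + ((v r k : ℝ):Rmax) := by
        rw [if_neg hk0]
        have : ((v r i : ℝ):Rmax) ≤ ((b k : ℝ):Rmax) + ((v r k : ℝ):Rmax) := by
          rw [← WithBot.coe_add, WithBot.coe_le_coe]; linarith
        rwa [show jVec J b k = ((b k : ℝ):Rmax) by simp [jVec, hk]]
      exact le_trans h2 (Finset.le_sup (f := fun j =>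
        (if j = j0 then S.sup (fun r => ((v r i - v r j0 : ℝ):Rmax)) else jVec J b j)
          + ((v r j : ℝ):Rmax)) hk)

lemma extreme_iff_wc (hmem : (unitVec i, jVec J b) ∈ polar (genCone v)) :
    IsExtremePair (polar (genCone v)) (unitVec i, jVec J b) ↔ Wc v i J b := by
  rw [extreme_iff_rigid v i J b hmem]
  constructor
  · intro hrig
    by_contra hnw
    obtain ⟨c, j0, hj0, hle, hlt, _, hcov⟩ := not_wc v i J b hmem hnw
    have hsupp : ∀ k ∉ J, c k = ⊥ := fun k hk =>
      le_bot_iff.mp (by simpa [jVec, hk] using hle k)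
    have := hrig c hle ((pair_mem_iff v i J c hsupp).mpr hcov)
    rw [this] at hlt
    simp [jVec, hj0] at hlt
  · intro hW c hle hcm
    have hsupp : ∀ k ∉ J, c k = ⊥ := fun k hk =>
      le_bot_iff.mp (by simpa [jVec, hk] using hle k)
    exact rigid v i J b hW c hle ((pair_mem_iff v i J c hsupp).mp hcm)

lemma bot_lt_zero : (⊥:Rmax) < 0 := by
  rw [← WithBot.coe_zero]; exact WithBot.bot_lt_coe 0

lemma sup_split {ι : Type} [Fintype ι] [DecidableEq ι] (k0 : ι) (f : ι → Rmax) :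
    Finset.univ.sup f = max (f k0) ((Finset.univ.erase k0).sup f) := by
  conv_lhs => rw [← Finset.insert_erase (mem_univ k0)]
  rw [Finset.sup_insert, sup_eq_max]

lemma subtype_sup_factor (K : Finset (Fin n)) (G : Fin n → Rmax) :
    Finset.univ.sup (fun k : {k : Fin n // k ∈ K} => G k.1) = K.sup G := by
  rw [Finset.univ_eq_attach]
  exact Finset.sup_attach K G

lemma cov_all (c : Fin n → Rmax) (hsupp : ∀ k ∉ J, c k = ⊥)
    (hcov : ∀ r, ((v r i : ℝ):Rmax) ≤ J.sup (fun j => c j + ((v r j : ℝ):Rmax))) :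
    ∀ x ∈ genCone v, x i ≤ J.sup (fun j => c j + x j) := by
  intro x hx
  have hp : Finset.univ.sup (fun k => unitVec i k + x k) ≤
      Finset.univ.sup (fun k => c k + x k) := (pair_mem_iff v i J c hsupp).mpr hcov x hx
  rwa [unit_sup, sup_support J _ (fun k hk => by rw [hsupp k hk, rbot_add])] at hp

lemma hmem_all (hmem : (unitVec i, jVec J b) ∈ polar (genCone v)) :
    ∀ x ∈ genCone v, x i ≤ J.sup (fun j => ((b j : ℝ):Rmax) + x j) := by
  intro x hx
  have h := hmem x hx
  rw [unit_sup, sup_support J _ (fun k hk => by simp [jVec, hk, rbot_add])] at h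
  exact le_trans h (le_of_eq (Finset.sup_congr rfl fun j hj => by simp [jVec, hj]))

lemma rhsH_factor (hiJ : i ∉ J) (x : Fin n → Rmax) :
    Finset.univ.sup (fun k : {k : Fin n // k ∈ insert i J} =>
        (if k.1 ∈ J then ((b k.1 : ℝ):Rmax) else ⊥) + x k.1) =
      J.sup (fun j => ((b j : ℝ):Rmax) + x j) := by
  rw [subtype_sup_factor (insert i J) (fun k => (if k ∈ J then ((b k : ℝ):Rmax) else ⊥) + x k),
    Finset.sup_insert]
  rw [if_neg hiJ, rbot_add, sup_eq_max]
  rw [max_eq_right bot_le]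
  exact Finset.sup_congr rfl fun j hj => by rw [if_pos hj]

lemma hs_H (hiJ : i ∉ J) :
    IsHalfSpace {y : {k : Fin n // k ∈ insert i J} → Rmax |
      y ⟨i, Finset.mem_insert_self i J⟩ ≤
        Finset.univ.sup (fun k => (if k.1 ∈ J then ((b k.1 : ℝ):Rmax) else ⊥) + y k)} := by
  refine ⟨fun k => if k = ⟨i, Finset.mem_insert_self i J⟩ then (0:Rmax) else ⊥,
    fun k => if k.1 ∈ J then ((b k.1 : ℝ):Rmax) else ⊥, ?_⟩
  ext y
  simp only [Set.mem_setOf_eq]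
  rw [sup_single (⟨i, Finset.mem_insert_self i J⟩ : {k : Fin n // k ∈ insert i J}) y]

lemma projV_sub_H (hiJ : i ∉ J) (hmem : (unitVec i, jVec J b) ∈ polar (genCone v)) :
    projCone (insert i J) (genCone v) ⊆
      {y : {k : Fin n // k ∈ insert i J} → Rmax |
        y ⟨i, Finset.mem_insert_self i J⟩ ≤
          Finset.univ.sup (fun k => (if k.1 ∈ J then ((b k.1 : ℝ):Rmax) else ⊥) + y k)} := by
  rintro y ⟨x, hx, rfl⟩
  simp only [Set.mem_setOf_eq]
  rw [rhsH_factor i J b hiJ x]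
  exact hmem_all v i J b hmem x hx

lemma not_wc_not_min (hiJ : i ∉ J) (hmem : (unitVec i, jVec J b) ∈ polar (genCone v))
    (hnw : ¬ Wc v i J b) :
    ¬ IsMinimalHalfSpace (projCone (insert i J) (genCone v))
      {y : {k : Fin n // k ∈ insert i J} → Rmax |
        y ⟨i, Finset.mem_insert_self i J⟩ ≤
          Finset.univ.sup (fun k => (if k.1 ∈ J then ((b k.1 : ℝ):Rmax) else ⊥) + y k)} := by
  intro hmin
  obtain ⟨c, j0, hj0, hle, hlt, hother, hcov⟩ := not_wc v i J b hmem hnw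
  have hij0 : j0 ≠ i := fun h => hiJ (h ▸ hj0)
  have hsupp : ∀ k ∉ J, c k = ⊥ := fun k hk =>
    le_bot_iff.mp (by simpa [jVec, hk] using hle k)
  set iK : {k : Fin n // k ∈ insert i J} := ⟨i, Finset.mem_insert_self i J⟩ with hiK
  set H' : Set ({k : Fin n // k ∈ insert i J} → Rmax) :=
    {y | y iK ≤ Finset.univ.sup (fun k => c k.1 + y k)} with hH'
  have hhs : IsHalfSpace H' := by
    refine ⟨fun k => if k = iK then (0:Rmax) else ⊥, fun k => c k.1, ?_⟩
    ext y
    simp only [hH', Set.mem_setOf_eq]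
    rw [sup_single iK y]
  have hprojH' : projCone (insert i J) (genCone v) ⊆ H' := by
    rintro y ⟨x, hx, rfl⟩
    simp only [hH', Set.mem_setOf_eq]
    have h1 : x i ≤ J.sup (fun j => c j + x j) := cov_all v i J c hsupp hcov x hx
    have h2 : J.sup (fun j => c j + x j) ≤ (insert i J).sup (fun j => c j + x j) :=
      Finset.sup_mono (Finset.subset_insert i J)
    rw [subtype_sup_factor (insert i J) (fun k => c k + x k)]
    exact le_trans h1 h2
  have hsubH : H' ⊆ {y : {k : Fin n // k ∈ insert i J} → Rmax |
      y iK ≤ Finset.univ.sup (fun k => (if k.1 ∈ J then ((b k.1 : ℝ):Rmax) else ⊥) + y k)} := by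
    intro y hy
    have hcc : ∀ k : {k : Fin n // k ∈ insert i J},
        c k.1 ≤ (if k.1 ∈ J then ((b k.1 : ℝ):Rmax) else ⊥) := by
      intro k
      by_cases hk : k.1 ∈ J
      · rw [if_pos hk]
        simpa [jVec, hk] using hle k.1
      · rw [if_neg hk, hsupp k.1 hk]
    exact le_trans hy (Finset.sup_mono_fun fun k _ => add_le_add_left (hcc k) _)
  set ys : {k : Fin n // k ∈ insert i J} → Rmax :=
    fun k => if k.1 = i then (0:Rmax) else if k.1 = j0 then (((-(b j0)) : ℝ):Rmax) else ⊥
      with hys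
  have hysH : ys ∈ {y : {k : Fin n // k ∈ insert i J} → Rmax |
      y iK ≤ Finset.univ.sup (fun k => (if k.1 ∈ J then ((b k.1 : ℝ):Rmax) else ⊥) + y k)} := by
    simp only [Set.mem_setOf_eq]
    have h0 : ys iK = (0:Rmax) := by simp [hys, hiK]
    set kj : {k : Fin n // k ∈ insert i J} := ⟨j0, Finset.mem_insert_of_mem hj0⟩ with hkj
    have h1 : (if kj.1 ∈ J then ((b kj.1 : ℝ):Rmax) else ⊥) + ys kj = (0:Rmax) := by
      have e1 : ys kj = (((-(b j0)) : ℝ):Rmax) := by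
        simp only [hys, hkj]
        rw [if_neg hij0]
        simp
      rw [e1, if_pos (show kj.1 ∈ J from hj0)]
      show ((b j0 : ℝ):Rmax) + (((-(b j0)) : ℝ):Rmax) = (0:Rmax)
      rw [← WithBot.coe_add, ← WithBot.coe_zero]
      norm_num
    rw [h0, ← h1]
    exact Finset.le_sup (f := fun k => (if k.1 ∈ J then ((b k.1 : ℝ):Rmax) else ⊥) + ys k)
      (mem_univ kj)
  have hysH' : ys ∉ H' := by
    simp only [hH', Set.mem_setOf_eq, not_le]
    have h0 : ys iK = (0:Rmax) := by simp [hys, hiK]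
    rw [h0]
    refine (Finset.sup_lt_iff bot_lt_zero).mpr fun k _ => ?_
    by_cases h1 : k.1 = i
    · have hki : k.1 ∉ J := by rw [h1]; exact hiJ
      rw [hsupp k.1 hki, rbot_add]; exact bot_lt_zero
    · by_cases h2 : k.1 = j0
      · have e2 : ys k = (((-(b j0)) : ℝ):Rmax) := by
          simp only [hys]
          rw [if_neg h1, if_pos h2]
        rw [e2, h2]
        have h3 := add_lt_add_coe (-(b j0)) hlt
        rw [← WithBot.coe_add] at h3
        have h4 : ((b j0 + -b j0 : ℝ):Rmax) = (0:Rmax) := by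
          rw [← WithBot.coe_zero]; norm_num
        rwa [h4] at h3
      · have e2 : ys k = ⊥ := by
          simp only [hys]
          rw [if_neg h1, if_neg h2]
        rw [e2, radd_bot]; exact bot_lt_zero
  exact hmin.2.2 ⟨H', hhs, hprojH',
    (Set.ssubset_iff_of_subset hsubH).mpr ⟨ys, hysH, hysH'⟩⟩

lemma wc_min (hiJ : i ∉ J) (hmem : (unitVec i, jVec J b) ∈ polar (genCone v))
    (hW : Wc v i J b) :
    IsMinimalHalfSpace (projCone (insert i J) (genCone v))
      {y : {k : Fin n // k ∈ insert i J} → Rmax |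
        y ⟨i, Finset.mem_insert_self i J⟩ ≤
          Finset.univ.sup (fun k => (if k.1 ∈ J then ((b k.1 : ℝ):Rmax) else ⊥) + y k)} := by
  classical
  refine ⟨hs_H i J b hiJ, projV_sub_H v i J b hiJ hmem, ?_⟩
  rintro ⟨H', ⟨a, c, rfl⟩, hproj, hss⟩
  set iK : {k : Fin n // k ∈ insert i J} := ⟨i, Finset.mem_insert_self i J⟩ with hiK
  -- Step 1 : c iK < a iK
  have hci : c iK < a iK := by
    by_contra hlec
    have hac : a iK ≤ c iK := not_lt.mp hlec
    set y0 : {k : Fin n // k ∈ insert i J} → Rmax :=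
      fun k => if k = iK then (0:Rmax) else ⊥ with hy0
    have hy0H' : y0 ∈ {x | Finset.univ.sup (fun k => a k + x k) ≤
        Finset.univ.sup (fun k => c k + x k)} := by
      show Finset.univ.sup (fun k => a k + y0 k) ≤ Finset.univ.sup (fun k => c k + y0 k)
      refine Finset.sup_le fun k _ => ?_
      by_cases hk : k = iK
      · have e0 : y0 iK = (0:Rmax) := by simp [hy0]
        have e1 : y0 k = (0:Rmax) := by rw [hk, e0]
        rw [e1, add_zero, hk]
        calc a iK ≤ c iK := hac
          _ = c iK + y0 iK := by rw [e0, add_zero]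
          _ ≤ _ := Finset.le_sup (f := fun k => c k + y0 k) (mem_univ iK)
      · have e1 : y0 k = ⊥ := by simp [hy0, hk]
        rw [e1, radd_bot]
        exact bot_le
    have hy0H := hss.subset hy0H'
    simp only [Set.mem_setOf_eq] at hy0H
    have e0 : y0 iK = (0:Rmax) := by simp [hy0]
    rw [e0] at hy0H
    have hbot : Finset.univ.sup
        (fun k => (if k.1 ∈ J then ((b k.1 : ℝ):Rmax) else ⊥) + y0 k) = ⊥ := by
      refine le_bot_iff.mp (Finset.sup_le fun k _ => ?_)
      by_cases hk : k = iK
      · subst hk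
        rw [if_neg (show ¬ (iK.1 ∈ J) from hiJ), rbot_add]
      · have e1 : y0 k = ⊥ := by simp [hy0, hk]
        rw [e1, radd_bot]
    rw [hbot] at hy0H
    exact absurd hy0H (by simp)
  obtain ⟨α, hα⟩ : ∃ α : ℝ, a iK = (α:Rmax) := by
    have hne : a iK ≠ ⊥ := ne_bot_of_gt hci
    obtain ⟨α, hα⟩ := WithBot.ne_bot_iff_exists.mp hne
    exact ⟨α, hα.symm⟩
  -- Step 2 : half-space geometry forces small coefficients on the `G` part
  have hGc : ∀ k : {k : Fin n // k ∈ insert i J}, k.1 ∈ J → a k ≤ c k →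
      c k ≤ ((α:ℝ):Rmax) + ((b k.1 : ℝ):Rmax) := by
    intro k hkJ hak
    by_cases hb : c k = ⊥
    · rw [hb]; exact bot_le
    obtain ⟨γ, hγ⟩ := WithBot.ne_bot_iff_exists.mp hb
    have hγ' : c k = (γ:Rmax) := hγ.symm
    have hki : k ≠ iK := by
      intro h
      rw [h] at hkJ
      exact hiJ hkJ
    set y1 : {k : Fin n // k ∈ insert i J} → Rmax :=
      fun k' => if k' = iK then ((γ - α : ℝ):Rmax) else if k' = k then (0:Rmax) else ⊥ with hy1
    have hy1H' : y1 ∈ {x | Finset.univ.sup (fun k => a k + x k) ≤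
        Finset.univ.sup (fun k => c k + x k)} := by
      show Finset.univ.sup (fun k => a k + y1 k) ≤ Finset.univ.sup (fun k => c k + y1 k)
      refine Finset.sup_le fun k' _ => ?_
      have hkey : ((γ:ℝ):Rmax) ≤ Finset.univ.sup (fun k' => c k' + y1 k') := by
        have e1 : c k + y1 k = ((γ:ℝ):Rmax) := by
          have : y1 k = (0:Rmax) := by
            simp only [hy1]
            rw [if_neg hki]
            simp
          rw [this, add_zero, hγ']
        calc ((γ:ℝ):Rmax) = c k + y1 k := e1.symm
          _ ≤ _ := Finset.le_sup (f := fun k' => c k' + y1 k') (mem_univ k)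
      by_cases h1 : k' = iK
      · have e1 : y1 k' = ((γ - α : ℝ):Rmax) := by rw [h1]; simp [hy1]
        rw [e1, h1, hα, ← WithBot.coe_add]
        have e2 : ((α + (γ - α) : ℝ):Rmax) = ((γ:ℝ):Rmax) := by norm_num
        rw [e2]
        exact hkey
      · by_cases h2 : k' = k
        · have e1 : y1 k' = (0:Rmax) := by
            simp only [hy1]
            rw [if_neg h1, if_pos h2]
          rw [e1, add_zero, h2]
          exact le_trans hak (by rw [← hγ']  at hkey; exact hkey)
        · have e1 : y1 k' = ⊥ := by
            simp only [hy1]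
            rw [if_neg h1, if_neg h2]
          rw [e1, radd_bot]
          exact bot_le
    have hy1H := hss.subset hy1H'
    simp only [Set.mem_setOf_eq] at hy1H
    have e0 : y1 iK = ((γ - α : ℝ):Rmax) := by simp [hy1]
    rw [e0] at hy1H
    have hup : Finset.univ.sup
        (fun k' => (if k'.1 ∈ J then ((b k'.1 : ℝ):Rmax) else ⊥) + y1 k') ≤
        ((b k.1 : ℝ):Rmax) := by
      refine Finset.sup_le fun k' _ => ?_
      by_cases h1 : k' = iK
      · rw [h1, if_neg (show ¬ (iK.1 ∈ J) from hiJ), rbot_add]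
        exact bot_le
      · by_cases h2 : k' = k
        · have e1 : y1 k' = (0:Rmax) := by
            simp only [hy1]
            rw [if_neg h1, if_pos h2]
          rw [e1, add_zero, h2, if_pos hkJ]
        · have e1 : y1 k' = ⊥ := by
            simp only [hy1]
            rw [if_neg h1, if_neg h2]
          rw [e1, radd_bot]
          exact bot_le
    have : ((γ - α : ℝ):Rmax) ≤ ((b k.1 : ℝ):Rmax) := le_trans hy1H hup
    rw [hγ', ← WithBot.coe_add, WithBot.coe_le_coe]
    have := WithBot.coe_le_coe.mp this
    linarith
  -- Step 3 : per-generator argmax analysis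
  have P : ∀ r : Fin p, ∃ k1 : {k : Fin n // k ∈ insert i J}, k1.1 ∈ J ∧ a k1 ≤ c k1 ∧
      ((α + v r i : ℝ):Rmax) ≤ c k1 + ((v r k1.1 : ℝ):Rmax) := by
    intro r
    set y : {k : Fin n // k ∈ insert i J} → Rmax := fun k => ((v r k.1 : ℝ):Rmax) with hy
    have hyH' : y ∈ {x | Finset.univ.sup (fun k => a k + x k) ≤
        Finset.univ.sup (fun k => c k + x k)} :=
      hproj ⟨fun k => ((v r k : ℝ):Rmax), mem_genCone_gen v r, rfl⟩
    simp only [Set.mem_setOf_eq] at hyH'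
    have hL : ((α + v r i : ℝ):Rmax) ≤ Finset.univ.sup (fun k => c k + y k) := by
      calc ((α + v r i : ℝ):Rmax) = a iK + y iK := by
            rw [hα]
            rw [show y iK = ((v r i : ℝ):Rmax) from rfl, ← WithBot.coe_add]
        _ ≤ Finset.univ.sup (fun k => a k + y k) :=
            Finset.le_sup (f := fun k => a k + y k) (mem_univ iK)
        _ ≤ _ := hyH'
    have hlt2 : c iK + y iK < ((α + v r i : ℝ):Rmax) := by
      have h1 : c iK + ((v r i : ℝ):Rmax) < a iK + ((v r i : ℝ):Rmax) :=
        add_lt_add_coe (v r i) hci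
      rw [hα, ← WithBot.coe_add] at h1
      exact h1
    have hm : ((α + v r i : ℝ):Rmax) ≤ (Finset.univ.erase iK).sup (fun k => c k + y k) := by
      rw [sup_split iK (fun k => c k + y k)] at hL
      rcases le_max_iff.mp hL with h | h
      · exact absurd (lt_of_le_of_lt h hlt2) (lt_irrefl _)
      · exact h
    obtain ⟨jr, hjr, _⟩ := cov_elim v i J
      ((pair_mem_iff v i J (jVec J b) (fun k hk => by simp [jVec, hk])).mp hmem r)
    have hne : (Finset.univ.erase iK).Nonempty := by
      refine ⟨⟨jr, Finset.mem_insert_of_mem hjr⟩, Finset.mem_erase.mpr ⟨?_, mem_univ _⟩⟩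
      intro h
      have : jr = i := congrArg Subtype.val h
      exact hiJ (this ▸ hjr)
    obtain ⟨k1, hk1m, hk1e⟩ := Finset.exists_mem_eq_sup (Finset.univ.erase iK) hne
      (fun k => c k + y k)
    have hk1i : k1 ≠ iK := (Finset.mem_erase.mp hk1m).1
    have hk1J : k1.1 ∈ J := by
      rcases Finset.mem_insert.mp k1.2 with h | h
      · exact absurd (Subtype.ext h) hk1i
      · exact h
    have hsupc : Finset.univ.sup (fun k => c k + y k) = c k1 + y k1 := by
      rw [sup_split iK (fun k => c k + y k), ← hk1e]
      exact max_eq_right (le_of_lt (lt_of_lt_of_le hlt2 hm))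
    have hak1 : a k1 ≤ c k1 := by
      have h5 : a k1 + y k1 ≤ c k1 + y k1 := by
        calc a k1 + y k1 ≤ Finset.univ.sup (fun k => a k + y k) :=
              Finset.le_sup (f := fun k => a k + y k) (mem_univ k1)
          _ ≤ Finset.univ.sup (fun k => c k + y k) := hyH'
          _ = c k1 + y k1 := hsupc
      exact (WithBot.add_le_add_iff_right (WithBot.coe_ne_bot)).mp h5
    exact ⟨k1, hk1J, hak1, hk1e ▸ hm⟩
  -- Step 4 : a ≤ c on all of J, via the witnesses
  have hGJ : ∀ k : {k : Fin n // k ∈ insert i J}, k.1 ∈ J → a k ≤ c k := by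
    intro k hkJ
    obtain ⟨r, hr1, hr2⟩ := hW k.1 hkJ
    obtain ⟨k1, hk1J, hak1, hle1⟩ := P r
    obtain ⟨γ1, hγ1⟩ := ne_bot_of_coe_le hle1
    have hreal1 : α + v r i ≤ γ1 + v r k1.1 := by
      rw [hγ1, ← WithBot.coe_add, WithBot.coe_le_coe] at hle1
      exact hle1
    have hreal2 : γ1 ≤ α + b k1.1 := by
      have := hGc k1 hk1J hak1
      rw [hγ1, ← WithBot.coe_add, WithBot.coe_le_coe] at this
      exact this
    have hbound : v r i - v r k1.1 ≤ b k1.1 := by linarith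
    have hkk : k1.1 = k.1 := by
      by_contra hne
      exact absurd hbound (not_le.mpr (hr2 k1.1 hk1J hne))
    have : k1 = k := Subtype.ext hkk
    rwa [this] at hak1
  -- Step 5 : c ≥ α + b on J, via rigidity
  have hCB : ∀ k : {k : Fin n // k ∈ insert i J}, k.1 ∈ J →
      ((α:ℝ):Rmax) + ((b k.1 : ℝ):Rmax) ≤ c k := by
    set cc : Fin n → Rmax := fun j =>
      if h : j ∈ J then min (c ⟨j, Finset.mem_insert_of_mem h⟩ + (((-α):ℝ):Rmax))
        ((b j : ℝ):Rmax) else ⊥ with hcc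
    have hcc_le : cc ≤ jVec J b := by
      intro j
      by_cases hj : j ∈ J
      · simp only [hcc, dif_pos hj, jVec, if_pos hj]
        exact min_le_right _ _
      · simp only [hcc, dif_neg hj, jVec, if_neg hj]
        exact le_refl _
    have hcc_cov : ∀ r, ((v r i : ℝ):Rmax) ≤ J.sup (fun j => cc j + ((v r j : ℝ):Rmax)) := by
      intro r
      obtain ⟨k1, hk1J, hak1, hle1⟩ := P r
      obtain ⟨γ1, hγ1⟩ := ne_bot_of_coe_le hle1
      have hreal1 : α + v r i ≤ γ1 + v r k1.1 := by
        rw [hγ1, ← WithBot.coe_add, WithBot.coe_le_coe] at hle1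
        exact hle1
      have hreal2 : γ1 ≤ α + b k1.1 := by
        have := hGc k1 hk1J hak1
        rw [hγ1, ← WithBot.coe_add, WithBot.coe_le_coe] at this
        exact this
      have hterm : ((v r i : ℝ):Rmax) ≤ cc k1.1 + ((v r k1.1 : ℝ):Rmax) := by
        have he : (⟨k1.1, Finset.mem_insert_of_mem hk1J⟩ :
            {k : Fin n // k ∈ insert i J}) = k1 := Subtype.ext rfl
        have e1 : cc k1.1 = min ((γ1 - α : ℝ):Rmax) ((b k1.1 : ℝ):Rmax) := by
          simp only [hcc, dif_pos hk1J]
          rw [he, hγ1, ← WithBot.coe_add]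
          have e2 : γ1 + -α = γ1 - α := by ring
          rw [e2]
        rw [e1, ← WithBot.coe_min, ← WithBot.coe_add, WithBot.coe_le_coe]
        rw [← min_add_add_right]
        refine le_min (by linarith) (by linarith)
      exact le_trans hterm (Finset.le_sup (f := fun j => cc j + ((v r j : ℝ):Rmax)) hk1J)
    have hccjv := rigid v i J b hW cc hcc_le hcc_cov
    intro k hkJ
    have he : (⟨k.1, Finset.mem_insert_of_mem hkJ⟩ :
        {k : Fin n // k ∈ insert i J}) = k := Subtype.ext rfl
    have h1 : cc k.1 = ((b k.1 : ℝ):Rmax) := by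
      rw [hccjv]
      simp [jVec, hkJ]
    rw [hcc] at h1
    simp only [dif_pos hkJ, he] at h1
    have h2 : ((b k.1 : ℝ):Rmax) ≤ c k + (((-α):ℝ):Rmax) := min_eq_right_iff.mp h1
    have h3 := add_le_add_left h2 ((α:ℝ):Rmax)
    have h4 : c k + (((-α):ℝ):Rmax) + ((α:ℝ):Rmax) = c k := by
      rw [add_assoc, ← WithBot.coe_add]
      norm_num
    rw [h4, ← WithBot.coe_add] at h3
    rw [← WithBot.coe_add]
    rw [show ((b k.1 + α : ℝ):Rmax) = ((α + b k.1 : ℝ):Rmax) by ring_nf] at h3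
    exact h3
  -- Step 6 : conclude H ⊆ H', contradicting strictness
  refine hss.not_subset ?_
  intro y hy
  simp only [Set.mem_setOf_eq] at hy ⊢
  refine Finset.sup_le fun k _ => ?_
  by_cases hk : k = iK
  · subst hk
    rw [hα]
    have step1 : ((α:ℝ):Rmax) + y iK ≤ ((α:ℝ):Rmax) +
        Finset.univ.sup (fun k => (if k.1 ∈ J then ((b k.1 : ℝ):Rmax) else ⊥) + y k) :=
      add_le_add_right hy _
    refine le_trans step1 ?_
    rw [← sup_add_left]
    refine Finset.sup_le fun k' _ => ?_
    by_cases hk' : k'.1 ∈ J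
    · rw [if_pos hk', ← add_assoc]
      calc ((α:ℝ):Rmax) + ((b k'.1 : ℝ):Rmax) + y k' ≤ c k' + y k' :=
            add_le_add_left (hCB k' hk') _
        _ ≤ _ := Finset.le_sup (f := fun k => c k + y k) (mem_univ k')
    · rw [if_neg hk', rbot_add, radd_bot]
      exact bot_le
  · have hkJ : k.1 ∈ J := by
      rcases Finset.mem_insert.mp k.2 with h | h
      · exact absurd (Subtype.ext h) hk
      · exact h
    calc a k + y k ≤ c k + y k := add_le_add_left (hGJ k hkJ) _
      _ ≤ _ := Finset.le_sup (f := fun k => c k + y k) (mem_univ k)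

lemma minimal_iff_wc (hiJ : i ∉ J) (hmem : (unitVec i, jVec J b) ∈ polar (genCone v)) :
    IsMinimalHalfSpace (projCone (insert i J) (genCone v))
      {y : {k : Fin n // k ∈ insert i J} → Rmax |
        y ⟨i, Finset.mem_insert_self i J⟩ ≤
          Finset.univ.sup (fun k => (if k.1 ∈ J then ((b k.1 : ℝ):Rmax) else ⊥) + y k)} ↔
      Wc v i J b := by
  constructor
  · intro hmin
    by_contra hnw
    exact not_wc_not_min v i J b hiJ hmem hnw hmin
  · exact wc_min v i J b hiJ hmem

end Main
end S19

/-- `(e^i, ⊕_{j∈J} b_j ⊙ e^j)` is an extreme vector of the polar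
iff the half-space `{x : x_i ≤ max_{j∈J}(b_j + x_j)}` of `ℝ_max^{J∪{i}}` is
minimal with respect to the projection of the cone on these coordinates. -/
theorem stmt_19 {n p : ℕ} (v : Fin p → Fin n → ℝ) (i : Fin n)
    (J : Finset (Fin n)) (b : Fin n → ℝ) (hiJ : i ∉ J)
    (hmem : (unitVec i, jVec J b) ∈ polar (genCone v)) :
    IsExtremePair (polar (genCone v)) (unitVec i, jVec J b) ↔
      IsMinimalHalfSpace (projCone (insert i J) (genCone v))
        {y : {k : Fin n // k ∈ insert i J} → Rmax |
          y ⟨i, Finset.mem_insert_self i J⟩ ≤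
            Finset.univ.sup (fun k =>
              (if k.1 ∈ J then ((b k.1 : Rmax)) else ⊥) + y k)} := by
  exact (S19.extreme_iff_wc v i J b hmem).trans
    (S19.minimal_iff_wc v i J b hiJ hmem).symm
end
end
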